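/- arXiv:2001.08671 — 6 statements merged into one kernel-verified Lean document; each statement's English description precedes it below -/
import Mathlib

section
/- Let X and Y be locally compact topological spaces with Y Hausdorff, let F : X → Y be continuous with F(x₀) = y₀, and suppose F is open at x₀. Then there exist a compact neighborhood X₀ ⊆ X of x₀ and a compact neighborhood Y₀ ⊆ Y of y₀ such that F maps X₀ onto Y₀ and the restriction F̃ : X₀ → Y₀ of F (with the subspace topologies) is a closed map, a continuous surjection, and a quotient map. -/
open Filter Topology Set Function

noncomputable section

/-- A map `F` is *open at the point* `x₀` if `F x₀` lies in the interior of the image of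
every neighborhood of `x₀`. -/
def OpenAtPt {X Y : Type*} [TopologicalSpace X] [TopologicalSpace Y]
    (F : X → Y) (x₀ : X) : Prop :=
  ∀ U ∈ nhds x₀, F x₀ ∈ interior (F '' U)

/-- With `X`, `Y` locally compact and `Y` Hausdorff, a continuous map open at
`x₀` restricts to a closed quotient map between compact neighborhoods `X₀` of `x₀` and `Y₀` of
`y₀ = F x₀`. -/
theorem statement2 {X Y : Type*} [TopologicalSpace X] [TopologicalSpace Y]
    [LocallyCompactSpace X] [LocallyCompactSpace Y] [T2Space Y]
    (F : X → Y) (x₀ : X) (y₀ : Y) (hFc : Continuous F) (hFx : F x₀ = y₀)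
    (hFo : OpenAtPt F x₀) :
    ∃ (X₀ : Set X) (Y₀ : Set Y),
      IsCompact X₀ ∧ X₀ ∈ nhds x₀ ∧ IsCompact Y₀ ∧ Y₀ ∈ nhds y₀ ∧ F '' X₀ = Y₀ ∧
        ∃ Ft : X₀ → Y₀, (∀ p : X₀, (Ft p : Y) = F (p : X)) ∧
          Continuous Ft ∧ Surjective Ft ∧ IsClosedMap Ft ∧ Topology.IsQuotientMap Ft := by
  obtain ⟨K, hKcomp, hKmem⟩ := exists_compact_mem_nhds x₀
  refine ⟨K, F '' K, hKcomp, hKmem, hKcomp.image hFc, ?_, rfl, ?_⟩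
  · have := hFo K hKmem
    rw [hFx] at this
    exact mem_interior_iff_mem_nhds.mp this
  · refine ⟨(mapsTo_image F K).restrict F K (F '' K), fun p => rfl, ?_, ?_, ?_, ?_⟩
    · exact Continuous.restrict _ hFc
    · rintro ⟨y, x, hx, rfl⟩
      exact ⟨⟨x, hx⟩, rfl⟩
    · haveI : CompactSpace K := isCompact_iff_compactSpace.mp hKcomp
      exact (Continuous.restrict _ hFc).isClosedMap
    · haveI : CompactSpace K := isCompact_iff_compactSpace.mp hKcomp
      exact ((Continuous.restrict _ hFc).isClosedMap).isQuotientMap (Continuous.restrict _ hFc)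
        (by rintro ⟨y, x, hx, rfl⟩; exact ⟨⟨x, hx⟩, rfl⟩)
end
end

section
/- If the vector field f is open at (0,0), then the control system ẋ = f(x,u) is locally exponentially stabilizable by a composition operator with a stationary symbol; that is, there exist an open neighborhood 𝒪 ⊆ ℝⁿ of 0 and a (not necessarily continuous) map h : 𝒪 → 𝒳 × 𝒰 with h(0) = (0,0) such that f ∘ h is continuous, the uniqueness criterion holds for f ∘ h, and the origin is a locally exponentially stable equilibrium of ẋ = (f ∘ h)(x). -/
open Filter Topology Set Function

noncomputable section

abbrev Vec (n : ℕ) : Type := Fin n → ℝ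

/-- `f`, viewed as a map defined on the set `s`, is *open at the point* `x₀ ∈ s`. -/
def OpenOnAt {X Y : Type*} [TopologicalSpace X] [TopologicalSpace Y]
    (f : X → Y) (s : Set X) (x₀ : X) : Prop :=
  ∀ U ∈ nhdsWithin x₀ s, f x₀ ∈ interior (f '' (U ∩ s))

/-- `x : [0,∞) → ℝⁿ` is a solution of `ẋ = g x` remaining in the domain `𝒪` of `g`. -/
def IsSolOn {n : ℕ} (𝒪 : Set (Vec n)) (g : Vec n → Vec n) (x : ℝ → Vec n) : Prop :=
  ∀ t : ℝ, 0 ≤ t → x t ∈ 𝒪 ∧ HasDerivAt x (g (x t)) t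

/-- the uniqueness criterion for `ẋ = g x` (`g` with domain `𝒪`): `g` is continuous and,
for every initial value near the origin, there is exactly one solution on `[0,∞)`. -/
def UniqCrit {n : ℕ} (𝒪 : Set (Vec n)) (g : Vec n → Vec n) : Prop :=
  ContinuousOn g 𝒪 ∧
    ∃ δ > (0:ℝ), ∀ x₀ : Vec n, ‖x₀‖ < δ →
      ((∃ x : ℝ → Vec n, IsSolOn 𝒪 g x ∧ x 0 = x₀) ∧
        ∀ x y : ℝ → Vec n, IsSolOn 𝒪 g x → IsSolOn 𝒪 g y → x 0 = x₀ → y 0 = x₀ →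
          ∀ t : ℝ, 0 ≤ t → x t = y t)

/-- the origin is a locally asymptotically stable equilibrium of `ẋ = g x`. -/
def LocAsympStable {n : ℕ} (𝒪 : Set (Vec n)) (g : Vec n → Vec n) : Prop :=
  (∀ ε > (0:ℝ), ∃ δ > (0:ℝ), ∀ x : ℝ → Vec n, IsSolOn 𝒪 g x → ‖x 0‖ < δ →
      ∀ t : ℝ, 0 ≤ t → ‖x t‖ < ε) ∧
    ∃ δ₀ > (0:ℝ), ∀ x : ℝ → Vec n, IsSolOn 𝒪 g x → ‖x 0‖ < δ₀ →
      Tendsto x atTop (nhds 0)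

/-- the origin is a locally exponentially stable equilibrium of `ẋ = g x`. -/
def LocExpStable {n : ℕ} (𝒪 : Set (Vec n)) (g : Vec n → Vec n) : Prop :=
  ∃ δ > (0:ℝ), ∃ M > (0:ℝ), ∃ lam > (0:ℝ),
    ∀ x : ℝ → Vec n, IsSolOn 𝒪 g x → ‖x 0‖ < δ →
      ∀ t : ℝ, 0 ≤ t → ‖x t‖ ≤ M * Real.exp (-lam * t) * ‖x 0‖

/-- If `f` is open at `(0,0)`, then `ẋ = f (x,u)` is locally exponentially
stabilizable by a composition operator with a (possibly discontinuous) stationary symbol. -/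
theorem statement4
    {n m : ℕ} (hn : 1 ≤ n) (hm : 1 ≤ m)
    (𝒳 : Set (Vec n)) (𝒰 : Set (Vec m))
    (hXUopen : IsOpen (𝒳 ×ˢ 𝒰)) (hXU0 : ((0 : Vec n), (0 : Vec m)) ∈ 𝒳 ×ˢ 𝒰)
    (f : Vec n × Vec m → Vec n)
    (hfc : ContinuousOn f (𝒳 ×ˢ 𝒰)) (hf0 : f (0, 0) = 0)
    (hopen : OpenOnAt f (𝒳 ×ˢ 𝒰) (0, 0)) :
    ∃ 𝒪 : Set (Vec n), IsOpen 𝒪 ∧ (0 : Vec n) ∈ 𝒪 ∧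
      ∃ h : Vec n → Vec n × Vec m, MapsTo h 𝒪 (𝒳 ×ˢ 𝒰) ∧ h 0 = (0, 0) ∧
        ContinuousOn (f ∘ h) 𝒪 ∧ UniqCrit 𝒪 (f ∘ h) ∧ LocExpStable 𝒪 (f ∘ h) := by
  -- From openness at (0,0), get a ball around 0 inside the image of f.
  have hf0' : f 0 = 0 := hf0
  have h0 : (0 : Vec n) ∈ interior (f '' (𝒳 ×ˢ 𝒰)) := by
    have := hopen Set.univ (by simp [univ_mem])
    simpa [hf0', hf0] using this
  obtain ⟨ε, hε, hball⟩ : ∃ ε > (0:ℝ), Metric.ball (0 : Vec n) ε ⊆ f '' (𝒳 ×ˢ 𝒰) := by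
    rcases Metric.mem_nhds_iff.1 (mem_interior_iff_mem_nhds.1 h0) with ⟨ε, hε, hb⟩
    exact ⟨ε, hε, hb⟩
  set 𝒪 : Set (Vec n) := Metric.ball (0 : Vec n) ε with h𝒪
  have key : ∀ x ∈ 𝒪, ∃ p : Vec n × Vec m, p ∈ 𝒳 ×ˢ 𝒰 ∧ f p = -x := by
    intro x hx
    have : -x ∈ 𝒪 := by
      simpa [h𝒪, mem_ball_zero_iff, norm_neg] using (mem_ball_zero_iff.1 hx)
    rcases hball this with ⟨p, hp, hfp⟩
    exact ⟨p, hp, hfp⟩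
  classical
  refine ⟨𝒪, Metric.isOpen_ball, Metric.mem_ball_self hε, ?_⟩
  set h : Vec n → Vec n × Vec m := fun x =>
    if hx : x ∈ 𝒪 ∧ x ≠ 0 then (key x hx.1).choose else (0, 0) with hh
  have h0' : h 0 = (0, 0) := by simp [hh]
  have hg : ∀ x ∈ 𝒪, (f ∘ h) x = -x := by
    intro x hx
    by_cases hx0 : x = 0
    · simp [hx0, hh, hf0', hf0]
    · have hc : x ∈ 𝒪 ∧ x ≠ 0 := ⟨hx, hx0⟩
      simp only [Function.comp, hh, dif_pos hc]
      exact (key x hx).choose_spec.2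
  have hmaps : MapsTo h 𝒪 (𝒳 ×ˢ 𝒰) := by
    intro x hx
    by_cases hx0 : x = 0
    · simpa [hx0, h0'] using hXU0
    · have hc : x ∈ 𝒪 ∧ x ≠ 0 := ⟨hx, hx0⟩
      simp only [hh, dif_pos hc]
      exact (key x hx).choose_spec.1
  set g : Vec n → Vec n := f ∘ h with hgdef
  -- every solution is x t = exp(-t) • x 0
  have sol_eq : ∀ x : ℝ → Vec n, IsSolOn 𝒪 g x →
      ∀ t : ℝ, 0 ≤ t → x t = Real.exp (-t) • x 0 := by
    intro x hx t ht
    set y : ℝ → Vec n := fun s => Real.exp s • x s with hy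
    have hyd : ∀ s : ℝ, 0 ≤ s → HasDerivAt y 0 s := by
      intro s hs
      obtain ⟨hmem, hder⟩ := hx s hs
      have hder' : HasDerivAt x (-(x s)) s := by
        have := hg (x s) hmem
        rwa [this] at hder
      have hexp : HasDerivAt Real.exp (Real.exp s) s := Real.hasDerivAt_exp s
      have := hexp.smul hder'
      rw [smul_neg, neg_add_cancel] at this
      exact this
    have hcont : ContinuousOn y (Set.Icc 0 t) := fun s hs =>
      ((hyd s hs.1).continuousAt).continuousWithinAt
    have := constant_of_has_deriv_right_zero hcont
      (fun s hs => ((hyd s hs.1).hasDerivWithinAt)) t (Set.mem_Icc.2 ⟨ht, le_rfl⟩)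
    have hyt : Real.exp t • x t = x 0 := by simpa [hy] using this
    have : Real.exp (-t) • (Real.exp t • x t) = Real.exp (-t) • x 0 := by rw [hyt]
    rwa [smul_smul, ← Real.exp_add, neg_add_cancel, Real.exp_zero, one_smul] at this
  -- existence of solutions
  have sol_ex : ∀ x₀ : Vec n, ‖x₀‖ < ε →
      IsSolOn 𝒪 g (fun t => Real.exp (-t) • x₀) ∧ (fun t => Real.exp (-t) • x₀) 0 = x₀ := by
    intro x₀ hx₀
    constructor
    · intro t ht
      have hmem : Real.exp (-t) • x₀ ∈ 𝒪 := by
        rw [h𝒪, mem_ball_zero_iff, norm_smul, Real.norm_eq_abs,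
          abs_of_pos (Real.exp_pos _)]
        calc Real.exp (-t) * ‖x₀‖ ≤ 1 * ‖x₀‖ := by
              apply mul_le_mul_of_nonneg_right _ (norm_nonneg _)
              exact Real.exp_le_one_iff.2 (by linarith)
          _ = ‖x₀‖ := one_mul _
          _ < ε := hx₀
      refine ⟨hmem, ?_⟩
      have hgval : g (Real.exp (-t) • x₀) = -(Real.exp (-t) • x₀) := hg _ hmem
      rw [hgval]
      have hd : HasDerivAt (fun s : ℝ => Real.exp (-s)) (Real.exp (-t) * (-1)) t :=
        (Real.hasDerivAt_exp (-t)).comp t ((hasDerivAt_id t).neg)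
      have := hd.smul_const x₀
      simpa [neg_smul, mul_comm] using this
    · simp
  refine ⟨h, hmaps, h0', ?_, ?_, ?_⟩
  · exact ContinuousOn.congr (continuousOn_id.neg) (fun x hx => hg x hx)
  · exact ⟨ContinuousOn.congr (continuousOn_id.neg) (fun x hx => hg x hx), ε, hε, fun x₀ hx₀ =>
      ⟨⟨_, (sol_ex x₀ hx₀).1, (sol_ex x₀ hx₀).2⟩,
        fun x y hx hy hx0 hy0 t ht => by
          rw [sol_eq x hx t ht, sol_eq y hy t ht, hx0, hy0]⟩⟩
  · refine ⟨ε, hε, 1, one_pos, 1, one_pos, fun x hx hx0 t ht => ?_⟩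
    rw [sol_eq x hx t ht, norm_smul, Real.norm_eq_abs,
      abs_of_pos (Real.exp_pos _), one_mul, neg_one_mul]
end
end

section
/- Let f be continuously differentiable. The control system ẋ = f(x,u) is locally exponentially stabilizable by a composition operator with a C¹ stationary symbol if and only if the Jacobian matrix of f at (0,0) (an n × (n+m) matrix) has rank n. -/
open Filter Topology Set Function

noncomputable section

/-- Solutions of `ẋ = -x` on `[0,∞)` are given by `x t = e^{-t} • x 0`. -/
lemma expSol {n : ℕ} {x : ℝ → Vec n} (hx : ∀ t : ℝ, 0 ≤ t → HasDerivAt x (-(x t)) t)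
    (b : ℝ) (hb : 0 ≤ b) : x b = Real.exp (-b) • x 0 := by
  have key : ∀ t ∈ Set.Icc (0:ℝ) b, Real.exp t • x t = Real.exp 0 • x 0 := by
    apply constant_of_has_deriv_right_zero (f := fun t => Real.exp t • x t)
    · intro t ht
      exact ((Real.hasDerivAt_exp t).smul (hx t ht.1)).continuousAt.continuousWithinAt
    · intro t ht
      have h1 := (Real.hasDerivAt_exp t).smul (hx t ht.1)
      have h2 : Real.exp t • -x t + Real.exp t • x t = 0 := by
        rw [smul_neg]; exact neg_add_cancel _
      rw [h2] at h1
      exact h1.hasDerivWithinAt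
  have h1 := key b ⟨hb, le_rfl⟩
  rw [Real.exp_zero, one_smul] at h1
  rw [← h1, smul_smul, ← Real.exp_add, neg_add_cancel, Real.exp_zero, one_smul]

set_option maxHeartbeats 2000000

/-- For `f` of class `C¹`, the system `ẋ = f (x,u)` is locally exponentially
stabilizable by a composition operator with a `C¹` stationary symbol iff the Jacobian of `f` at
`(0,0)` has rank `n`. -/
theorem statement8
    {n m : ℕ} (hn : 1 ≤ n) (hm : 1 ≤ m)
    (𝒳 : Set (Vec n)) (𝒰 : Set (Vec m))
    (hXUopen : IsOpen (𝒳 ×ˢ 𝒰)) (hXU0 : ((0 : Vec n), (0 : Vec m)) ∈ 𝒳 ×ˢ 𝒰)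
    (f : Vec n × Vec m → Vec n)
    (hfc : ContDiffOn ℝ 1 f (𝒳 ×ˢ 𝒰)) (hf0 : f (0, 0) = 0) :
    (∃ 𝒪 : Set (Vec n), IsOpen 𝒪 ∧ (0 : Vec n) ∈ 𝒪 ∧
        ∃ h : Vec n → Vec n × Vec m, MapsTo h 𝒪 (𝒳 ×ˢ 𝒰) ∧ h 0 = (0, 0) ∧
          ContDiffOn ℝ 1 h 𝒪 ∧ UniqCrit 𝒪 (f ∘ h) ∧ LocExpStable 𝒪 (f ∘ h)) ↔
      Module.finrank ℝ
        (LinearMap.range (fderivWithin ℝ f (𝒳 ×ˢ 𝒰) ((0 : Vec n), (0 : Vec m))).toLinearMap)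
        = n := by
  have hL : fderivWithin ℝ f (𝒳 ×ˢ 𝒰) ((0 : Vec n), (0 : Vec m))
      = fderiv ℝ f ((0 : Vec n), (0 : Vec m)) := fderivWithin_of_isOpen hXUopen hXU0
  have hfin : Module.finrank ℝ (Vec n) = n := Module.finrank_fin_fun ℝ
  constructor
  · -- stabilizable → rank n
    rintro ⟨𝒪, hO, hO0, h, hmap, h0, hhc, ⟨hgc, δu, hδu, huniq⟩, δ, hδ, M, hM, lam, hlam, hexp⟩
    suffices htop : LinearMap.range
        (fderivWithin ℝ f (𝒳 ×ˢ 𝒰) ((0 : Vec n), (0 : Vec m))).toLinearMap = ⊤ by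
      rw [htop, finrank_top, hfin]
    by_contra hne
    set p : Submodule ℝ (Vec n) :=
      LinearMap.range (fderivWithin ℝ f (𝒳 ×ˢ 𝒰) ((0 : Vec n), (0 : Vec m))).toLinearMap with hp
    have hlt : p < ⊤ := lt_top_iff_ne_top.2 hne
    obtain ⟨v, -, hv⟩ := SetLike.exists_of_lt hlt
    have hw : (Submodule.Quotient.mk v : Vec n ⧸ p) ≠ 0 := by
      rwa [Ne, Submodule.Quotient.mk_eq_zero]
    obtain ⟨ψ, hψ⟩ : ∃ ψ : Module.Dual ℝ (Vec n ⧸ p), ψ (Submodule.Quotient.mk v) ≠ 0 := by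
      by_contra hc
      push_neg at hc
      exact hw ((Module.forall_dual_apply_eq_zero_iff ℝ _).1 hc)
    set C : Vec n →L[ℝ] ℝ := LinearMap.toContinuousLinearMap (ψ ∘ₗ p.mkQ) with hC
    have hCv : C v ≠ 0 := hψ
    have hv0 : v ≠ 0 := by
      intro hv0
      apply hCv
      rw [hv0]
      exact map_zero C
    have hnv : 0 < ‖v‖ := norm_pos_iff.2 hv0
    have hCL : ∀ z : Vec n × Vec m, C (fderiv ℝ f ((0 : Vec n), (0 : Vec m)) z) = 0 := by
      intro z
      have hz : fderiv ℝ f ((0 : Vec n), (0 : Vec m)) z ∈ p := by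
        rw [hp, ← hL]
        exact LinearMap.mem_range_self _ z
      have : p.mkQ (fderiv ℝ f ((0 : Vec n), (0 : Vec m)) z) = 0 :=
        (Submodule.Quotient.mk_eq_zero _).2 hz
      simp only [hC, LinearMap.coe_toContinuousLinearMap', LinearMap.comp_apply, this, map_zero]
    -- derivative of f ∘ h at 0
    have hh' : DifferentiableAt ℝ h 0 :=
      ((hhc.contDiffAt (hO.mem_nhds hO0)).differentiableAt one_ne_zero)
    have hfA : DifferentiableAt ℝ f ((0 : Vec n), (0 : Vec m)) :=
      ((hfc.contDiffAt (hXUopen.mem_nhds hXU0)).differentiableAt one_ne_zero)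
    set D : Vec n →L[ℝ] Vec n :=
      (fderiv ℝ f ((0 : Vec n), (0 : Vec m))).comp (fderiv ℝ h 0) with hD
    have hg0 : HasFDerivAt (f ∘ h) D 0 := by
      have h1 : HasFDerivAt f (fderiv ℝ f ((0 : Vec n), (0 : Vec m))) (h 0) := by
        rw [h0]; exact hfA.hasFDerivAt
      exact h1.comp 0 hh'.hasFDerivAt
    have hCD : ∀ y : Vec n, C (D y) = 0 := fun y => hCL _
    have hg00 : (f ∘ h) 0 = 0 := by
      show f (h 0) = 0
      rw [h0]; exact hf0
    -- small-o bound on C ∘ (f ∘ h)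
    have hbound : ∀ ε > (0:ℝ), ∃ r > (0:ℝ), ∀ y : Vec n, ‖y‖ < r →
        |C ((f ∘ h) y)| ≤ (‖C‖ + 1) * ε * ‖y‖ := by
      intro ε hε
      have hlo := hg0.isLittleO
      rw [Asymptotics.isLittleO_iff] at hlo
      have hev := hlo hε
      simp only [hg00, sub_zero] at hev
      rw [Metric.eventually_nhds_iff] at hev
      obtain ⟨r, hr, hball⟩ := hev
      refine ⟨r, hr, fun y hy => ?_⟩
      have h1 := hball (show dist y 0 < r by rwa [dist_zero_right])
      have h2 : C ((f ∘ h) y) = C ((f ∘ h) y - D y) := by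
        rw [map_sub, hCD, sub_zero]
      rw [h2]
      calc |C ((f ∘ h) y - D y)| ≤ ‖C‖ * ‖(f ∘ h) y - D y‖ := C.le_opNorm _
        _ ≤ ‖C‖ * (ε * ‖y‖) := by
            apply mul_le_mul_of_nonneg_left _ (norm_nonneg C)
            simpa using h1
        _ ≤ (‖C‖ + 1) * ε * ‖y‖ := by nlinarith [norm_nonneg C, norm_nonneg y]
    -- main estimate
    have hzero : ∀ ε > (0:ℝ), |C v| ≤ ε * ((‖C‖ + 1) * M * ‖v‖ / lam) := by
      intro ε hε
      obtain ⟨r, hr, hrb⟩ := hbound ε hε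
      set b0 : ℝ := min (min δu δ) (r / (M + 1)) with hb0
      have hb0pos : 0 < b0 := by
        apply lt_min (lt_min hδu hδ)
        positivity
      set s : ℝ := b0 / (2 * ‖v‖) with hs
      have hspos : 0 < s := by positivity
      set x₀ : Vec n := s • v with hx₀
      have hnx₀ : ‖x₀‖ = b0 / 2 := by
        rw [hx₀, norm_smul, Real.norm_eq_abs, abs_of_pos hspos, hs]
        field_simp
      have hx₀δu : ‖x₀‖ < δu := by
        rw [hnx₀]
        calc b0 / 2 < b0 := by linarith
          _ ≤ δu := le_trans (min_le_left _ _) (min_le_left _ _)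
      have hx₀δ : ‖x₀‖ < δ := by
        rw [hnx₀]
        calc b0 / 2 < b0 := by linarith
          _ ≤ δ := le_trans (min_le_left _ _) (min_le_right _ _)
      obtain ⟨⟨x, hsol, hx0⟩, -⟩ := huniq x₀ hx₀δu
      have hdecay : ∀ t : ℝ, 0 ≤ t → ‖x t‖ ≤ M * Real.exp (-lam * t) * ‖x₀‖ := by
        intro t ht
        have := hexp x hsol (by rwa [hx0]) t ht
        rwa [hx0] at this
      have hsmall : ∀ t : ℝ, 0 ≤ t → ‖x t‖ < r := by
        intro t ht
        have h1 := hdecay t ht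
        have h2 : Real.exp (-lam * t) ≤ 1 := by
          apply Real.exp_le_one_iff.2
          nlinarith
        have h3 : ‖x₀‖ ≤ r / (M + 1) / 2 := by
          rw [hnx₀]
          have : b0 ≤ r / (M + 1) := min_le_right _ _
          linarith
        have h4 : M * Real.exp (-lam * t) * ‖x₀‖ ≤ M * (r / (M + 1) / 2) := by
          calc M * Real.exp (-lam * t) * ‖x₀‖ ≤ M * 1 * ‖x₀‖ := by
                apply mul_le_mul_of_nonneg_right _ (norm_nonneg x₀)
                exact mul_le_mul_of_nonneg_left h2 hM.le
            _ = M * ‖x₀‖ := by ring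
            _ ≤ M * (r / (M + 1) / 2) := mul_le_mul_of_nonneg_left h3 hM.le
        have h5 : M * (r / (M + 1) / 2) < r := by
          rw [div_div, ← mul_div_assoc, div_lt_iff₀ (by positivity : (0:ℝ) < (M + 1) * 2)]
          nlinarith
        linarith
      set K : ℝ := (‖C‖ + 1) * ε * (M * ‖x₀‖) with hK
      have hKnn : 0 ≤ K := by
        have := norm_nonneg C
        have := norm_nonneg x₀
        positivity
      -- derivative bound
      have hder : ∀ t : ℝ, 0 ≤ t →
          HasDerivAt (fun t => C (x t) - C (x 0)) (C ((f ∘ h) (x t))) t := by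
        intro t ht
        exact ((C.hasFDerivAt.comp_hasDerivAt t (hsol t ht).2).sub_const _)
      have hdb : ∀ t : ℝ, 0 ≤ t → ‖C ((f ∘ h) (x t))‖ ≤ K * Real.exp (-lam * t) := by
        intro t ht
        rw [Real.norm_eq_abs]
        calc |C ((f ∘ h) (x t))| ≤ (‖C‖ + 1) * ε * ‖x t‖ := hrb _ (hsmall t ht)
          _ ≤ (‖C‖ + 1) * ε * (M * Real.exp (-lam * t) * ‖x₀‖) := by
              apply mul_le_mul_of_nonneg_left (hdecay t ht)
              have := norm_nonneg C
              positivity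
          _ = K * Real.exp (-lam * t) := by rw [hK]; ring
      -- the fencing bound B
      have hBder : ∀ t : ℝ, HasDerivAt (fun t => K / lam * (1 - Real.exp (-lam * t)))
          (K * Real.exp (-lam * t)) t := by
        intro t
        have h1 : HasDerivAt (fun t : ℝ => -lam * t) (-lam) t := by
          simpa using (hasDerivAt_id t).const_mul (-lam)
        have h2 := (Real.hasDerivAt_exp (-lam * t)).comp t h1
        have h3 := ((hasDerivAt_const t (1:ℝ)).sub h2).const_mul (K / lam)
        refine h3.congr_deriv (Eq.symm ?_)
        rw [div_mul_eq_mul_div, eq_div_iff hlam.ne']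
        ring
      have hfen : ∀ b : ℝ, 0 ≤ b → ‖C (x b) - C (x 0)‖ ≤ K / lam := by
        intro b hb
        have hmain := image_norm_le_of_norm_deriv_right_le_deriv_boundary
          (f := fun t => C (x t) - C (x 0)) (a := 0) (b := b)
          (f' := fun t => C ((f ∘ h) (x t)))
          (fun t ht => (hder t ht.1).continuousAt.continuousWithinAt)
          (fun t ht => (hder t ht.1).hasDerivWithinAt)
          (B := fun t => K / lam * (1 - Real.exp (-lam * t)))
          (B' := fun t => K * Real.exp (-lam * t))
          (by simp) hBder (fun t ht => hdb t ht.1)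
        have h1 := hmain ⟨hb, le_rfl⟩
        have h2 : K / lam * (1 - Real.exp (-lam * b)) ≤ K / lam := by
          have h3 : 0 < Real.exp (-lam * b) := Real.exp_pos _
          have h4 : 0 ≤ K / lam := by positivity
          nlinarith
        linarith
      -- limit as t → ∞
      have hlim : Tendsto (fun b => C (x b)) atTop (𝓝 0) := by
        apply squeeze_zero_norm' (a := fun b => ‖C‖ * (M * ‖x₀‖) * Real.exp (-lam * b))
        · filter_upwards [eventually_ge_atTop (0:ℝ)] with b hb
          calc ‖C (x b)‖ ≤ ‖C‖ * ‖x b‖ := C.le_opNorm _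
            _ ≤ ‖C‖ * (M * Real.exp (-lam * b) * ‖x₀‖) := by
                apply mul_le_mul_of_nonneg_left (hdecay b hb) (norm_nonneg C)
            _ = ‖C‖ * (M * ‖x₀‖) * Real.exp (-lam * b) := by ring
        · have h1 : Tendsto (fun b : ℝ => -lam * b) atTop atBot := by
            apply Tendsto.const_mul_atTop_of_neg (neg_neg_iff_pos.2 hlam) tendsto_id
          have h2 : Tendsto (fun b : ℝ => Real.exp (-lam * b)) atTop (𝓝 0) :=
            Real.tendsto_exp_atBot.comp h1
          have h3 := h2.const_mul (‖C‖ * (M * ‖x₀‖))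
          simpa using h3
      have hlim2 : Tendsto (fun b => ‖C (x b) - C (x 0)‖) atTop (𝓝 ‖(0:ℝ) - C (x 0)‖) :=
        ((hlim.sub_const _).norm)
      have hfinal : ‖(0:ℝ) - C (x 0)‖ ≤ K / lam :=
        le_of_tendsto hlim2 (by
          filter_upwards [eventually_ge_atTop (0:ℝ)] with b hb
          exact hfen b hb)
      rw [zero_sub, norm_neg, hx0] at hfinal
      have hCx₀ : ‖C x₀‖ = s * |C v| := by
        rw [hx₀, map_smul, smul_eq_mul, Real.norm_eq_abs, abs_mul, abs_of_pos hspos]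
      rw [hCx₀] at hfinal
      have hKval : K / lam = s * (ε * ((‖C‖ + 1) * M * ‖v‖ / lam)) := by
        rw [hK, hnx₀, hs]
        field_simp
      rw [hKval] at hfinal
      exact le_of_mul_le_mul_left (by linarith [hfinal]) hspos
    -- conclude C v = 0, contradiction
    apply hCv
    have habs : |C v| ≤ 0 := by
      apply le_of_forall_pos_le_add
      intro ε hε
      set Q : ℝ := (‖C‖ + 1) * M * ‖v‖ / lam with hQ
      have hQnn : 0 ≤ Q := by
        have := norm_nonneg C
        positivity
      have h1 := hzero (ε / (Q + 1)) (by positivity)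
      have h2 : ε / (Q + 1) * Q ≤ ε := by
        rw [div_mul_eq_mul_div, div_le_iff₀ (by positivity)]
        nlinarith
      linarith
    exact abs_eq_zero.1 (le_antisymm habs (abs_nonneg _))
  · -- rank n → stabilizable
    intro hrank
    have htop : LinearMap.range
        (fderivWithin ℝ f (𝒳 ×ˢ 𝒰) ((0 : Vec n), (0 : Vec m))).toLinearMap = ⊤ :=
      Submodule.eq_top_of_finrank_eq (hrank.trans hfin.symm)
    obtain ⟨R, hR⟩ := LinearMap.exists_rightInverse_of_surjective _ htop
    set Rc : Vec n →L[ℝ] Vec n × Vec m := LinearMap.toContinuousLinearMap R with hRc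
    have hR0 : Rc 0 = ((0 : Vec n), (0 : Vec m)) := by
      have := map_zero Rc
      exact this
    have hfA : ContDiffAt ℝ 1 f ((0 : Vec n), (0 : Vec m)) :=
      hfc.contDiffAt (hXUopen.mem_nhds hXU0)
    have hFc : ContDiffAt ℝ 1 (fun y : Vec n => f (Rc y)) 0 := by
      have h2 : ContDiffAt ℝ 1 (fun y : Vec n => Rc y) 0 := Rc.contDiff.contDiffAt
      have h1 : ContDiffAt ℝ 1 f (Rc 0) := by rw [hR0]; exact hfA
      exact ContDiffAt.comp (0 : Vec n) h1 h2
    have hF' : HasFDerivAt (fun y : Vec n => f (Rc y))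
        ((ContinuousLinearEquiv.refl ℝ (Vec n) : Vec n ≃L[ℝ] Vec n) : Vec n →L[ℝ] Vec n) 0 := by
      have h1 : HasFDerivAt f (fderiv ℝ f ((0 : Vec n), (0 : Vec m))) (Rc 0) := by
        rw [hR0]; exact (hfA.differentiableAt one_ne_zero).hasFDerivAt
      have h2 := h1.comp (0 : Vec n) Rc.hasFDerivAt
      refine h2.congr_fderiv (Eq.symm ?_)
      refine ContinuousLinearMap.ext fun y => ?_
      have hy := LinearMap.ext_iff.1 hR y
      simp only [LinearMap.comp_apply, LinearMap.id_apply] at hy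
      simp only [ContinuousLinearMap.coe_comp', comp_apply,
        ContinuousLinearEquiv.coe_coe, ContinuousLinearEquiv.refl_apply, hRc,
        LinearMap.coe_toContinuousLinearMap']
      rw [← hL]
      exact hy.symm
    set ψ : Vec n → Vec n := hFc.localInverse hF' one_ne_zero with hψdef
    have hF0 : (fun y : Vec n => f (Rc y)) 0 = 0 := by
      show f (Rc 0) = 0
      rw [hR0]; exact hf0
    have hF0' : f (Rc 0) = 0 := by rw [hR0]; exact hf0
    have hψC : ContDiffAt ℝ 1 ψ 0 := by
      have := hFc.to_localInverse hF' one_ne_zero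
      rwa [hF0'] at this
    have hψ0 : ψ 0 = 0 := by
      have h1 := hFc.localInverse_apply_image hF' one_ne_zero
      rw [hF0'] at h1
      exact h1
    have hri : ∀ᶠ y in 𝓝 (0 : Vec n), f (Rc (ψ y)) = y := by
      have h1 := (hFc.hasStrictFDerivAt' hF' one_ne_zero).eventually_right_inverse
      rw [hF0'] at h1
      exact h1
    obtain ⟨u, hu, hψu⟩ := hψC.contDiffOn le_rfl (by simp)
    set h : Vec n → Vec n × Vec m := fun y => Rc (ψ (-y)) with hhdef
    have hh0 : h 0 = ((0 : Vec n), (0 : Vec m)) := by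
      simp only [hhdef, neg_zero, hψ0, hR0]
    have hhcont : ContinuousAt h 0 := by
      have h1 : ContinuousAt (fun y : Vec n => -y) 0 := continuous_neg.continuousAt
      have h2 : ContinuousAt (fun y : Vec n => ψ (-y)) 0 := by
        refine ContinuousAt.comp ?_ h1
        rw [neg_zero]
        exact hψC.continuousAt
      exact ContinuousAt.comp Rc.continuous.continuousAt h2
    -- neighborhood on which everything works
    have hNeg : ∀ s ∈ 𝓝 (0 : Vec n), (fun y : Vec n => -y) ⁻¹' s ∈ 𝓝 (0 : Vec n) := by
      intro s hs
      have : Tendsto (fun y : Vec n => -y) (𝓝 0) (𝓝 0) := by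
        simpa using (continuous_neg.tendsto (0 : Vec n))
      exact this hs
    have hN : ((fun y : Vec n => -y) ⁻¹' (u ∩ {y | f (Rc (ψ y)) = y}) ∩
        h ⁻¹' (𝒳 ×ˢ 𝒰)) ∈ 𝓝 (0 : Vec n) := by
      refine Filter.inter_mem (hNeg _ (Filter.inter_mem hu hri)) ?_
      exact hhcont.preimage_mem_nhds (hh0 ▸ hXUopen.mem_nhds hXU0)
    obtain ⟨ρ, hρ, hball⟩ := Metric.mem_nhds_iff.1 hN
    refine ⟨Metric.ball 0 ρ, Metric.isOpen_ball, Metric.mem_ball_self hρ, h, ?_, hh0, ?_, ?_, ?_⟩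
    · intro y hy
      exact (hball hy).2
    · -- ContDiffOn
      have h1 : ContDiffOn ℝ 1 (fun y : Vec n => ψ (-y)) (Metric.ball 0 ρ) := by
        refine ContDiffOn.comp hψu (contDiff_neg.contDiffOn) ?_
        intro y hy
        exact ((hball hy).1).1
      exact (Rc.contDiff.comp_contDiffOn h1 : _)
    · -- UniqCrit
      have key : ∀ y ∈ Metric.ball (0 : Vec n) ρ, (f ∘ h) y = -y := by
        intro y hy
        exact ((hball hy).1).2
      constructor
      · exact (continuous_neg.continuousOn).congr key
      · refine ⟨ρ, hρ, fun x₀ hx₀ => ⟨⟨fun t => Real.exp (-t) • x₀, ?_, by simp⟩, ?_⟩⟩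
        · intro t ht
          have hmem : Real.exp (-t) • x₀ ∈ Metric.ball (0 : Vec n) ρ := by
            rw [mem_ball_zero_iff, norm_smul, Real.norm_eq_abs,
              abs_of_pos (Real.exp_pos _)]
            calc Real.exp (-t) * ‖x₀‖ ≤ 1 * ‖x₀‖ := by
                  apply mul_le_mul_of_nonneg_right _ (norm_nonneg _)
                  exact Real.exp_le_one_iff.2 (neg_nonpos.2 ht)
              _ < ρ := by rwa [one_mul]
          refine ⟨hmem, ?_⟩
          rw [key _ hmem]
          have hd : HasDerivAt (fun t : ℝ => Real.exp (-t)) (-Real.exp (-t)) t := by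
            have := (Real.hasDerivAt_exp (-t)).comp t (hasDerivAt_neg t)
            exact this.congr_deriv (by ring)
          have := hd.smul_const x₀
          simpa [neg_smul] using this
        · intro x y hx hy hx0 hy0 t ht
          have ex : ∀ z : ℝ → Vec n, IsSolOn (Metric.ball 0 ρ) (f ∘ h) z →
              ∀ s : ℝ, 0 ≤ s → z s = Real.exp (-s) • z 0 := by
            intro z hz
            refine expSol (fun s hs => ?_)
            have h1 := (hz s hs).2
            rwa [key _ (hz s hs).1] at h1
          rw [ex x hx t ht, ex y hy t ht, hx0, hy0]
    · -- LocExpStable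
      have key : ∀ y ∈ Metric.ball (0 : Vec n) ρ, (f ∘ h) y = -y := by
        intro y hy
        exact ((hball hy).1).2
      refine ⟨ρ, hρ, 1, one_pos, 1, one_pos, fun x hx hx0 t ht => ?_⟩
      have hx' : ∀ s : ℝ, 0 ≤ s → HasDerivAt x (-(x s)) s := by
        intro s hs
        have h1 := (hx s hs).2
        rwa [key _ (hx s hs).1] at h1
      rw [expSol hx' t ht, norm_smul, Real.norm_eq_abs, abs_of_pos (Real.exp_pos _)]
      rw [one_mul, neg_one_mul]
end
end

section
/- Let k ≥ 1 and let f be of class Cᵏ. The control system ẋ = f(x,u) is locally exponentially stabilizable by a composition operator with a Cᵏ stationary symbol if and only if f has a Cᵏ stationary local section near the origin. -/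
open Filter Topology Set Function

noncomputable section

lemma flow_formula {n : ℕ} {𝒪 : Set (Vec n)} {g : Vec n → Vec n}
    (hg : ∀ y ∈ 𝒪, g y = -y)
    {x : ℝ → Vec n} (hx : IsSolOn 𝒪 g x) :
    ∀ t : ℝ, 0 ≤ t → x t = Real.exp (-t) • x 0 := by
  intro b hb
  set w : ℝ → Vec n := fun t => Real.exp t • x t with hw
  have hder : ∀ t : ℝ, 0 ≤ t → HasDerivAt w 0 t := by
    intro t ht
    obtain ⟨hmem, hd⟩ := hx t ht
    rw [hg _ hmem] at hd
    have := (Real.hasDerivAt_exp t).smul hd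
    refine this.congr_deriv ?_
    simp [smul_neg]
  have hconst : ∀ t ∈ Icc 0 b, w t = w 0 :=
    constant_of_has_deriv_right_zero
      (fun t ht => (hder t ht.1).continuousAt.continuousWithinAt)
      (fun t ht => (hder t ht.1).hasDerivWithinAt)
  have := hconst b ⟨hb, le_rfl⟩
  have hxb : Real.exp b • x b = x 0 := by simpa [hw] using this
  rw [← hxb, smul_smul, ← Real.exp_add]
  simp

lemma backward {n m : ℕ}
    (𝒳 : Set (Vec n)) (𝒰 : Set (Vec m))
    (f : Vec n × Vec m → Vec n) (k : ℕ)
    (hyp : ∃ 𝒪 : Set (Vec n), IsOpen 𝒪 ∧ (0 : Vec n) ∈ 𝒪 ∧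
        ∃ α : Vec n → Vec n × Vec m, MapsTo α 𝒪 (𝒳 ×ˢ 𝒰) ∧ α 0 = (0, 0) ∧
          ContDiffOn ℝ k α 𝒪 ∧ ∀ y ∈ 𝒪, f (α y) = y) :
    (∃ 𝒪 : Set (Vec n), IsOpen 𝒪 ∧ (0 : Vec n) ∈ 𝒪 ∧
        ∃ h : Vec n → Vec n × Vec m, MapsTo h 𝒪 (𝒳 ×ˢ 𝒰) ∧ h 0 = (0, 0) ∧
          ContDiffOn ℝ k h 𝒪 ∧ UniqCrit 𝒪 (f ∘ h) ∧ LocExpStable 𝒪 (f ∘ h)) := by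
  obtain ⟨𝒪, hO, h0O, α, hmap, hα0, hαC, hsec⟩ := hyp
  obtain ⟨r, hr, hball⟩ := Metric.isOpen_iff.1 hO 0 h0O
  set B : Set (Vec n) := Metric.ball (0 : Vec n) r with hB
  have hnegB : ∀ y ∈ B, -y ∈ 𝒪 := by
    intro y hy
    apply hball
    rw [mem_ball_zero_iff] at hy ⊢
    simpa using hy
  set h : Vec n → Vec n × Vec m := fun y => α (-y) with hh
  have key : ∀ y ∈ B, (f ∘ h) y = -y := fun y hy => hsec (-y) (hnegB y hy)
  refine ⟨B, Metric.isOpen_ball, Metric.mem_ball_self hr, h,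
    fun y hy => hmap (hnegB y hy), by simp [hh, hα0], ?_, ?_, ?_⟩
  · exact hαC.comp (contDiff_neg.contDiffOn) (fun y hy => hnegB y hy)
  · refine ⟨(continuous_neg.continuousOn).congr key, r, hr, fun x₀ hx₀ => ⟨?_, ?_⟩⟩
    · refine ⟨fun t => Real.exp (-t) • x₀, fun t ht => ⟨?_, ?_⟩, by simp⟩
      · rw [hB, mem_ball_zero_iff, norm_smul]
        calc ‖Real.exp (-t)‖ * ‖x₀‖ ≤ 1 * ‖x₀‖ := by
              apply mul_le_mul_of_nonneg_right _ (norm_nonneg _)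
              rw [Real.norm_eq_abs, abs_of_pos (Real.exp_pos _)]
              exact Real.exp_le_one_iff.2 (by linarith)
          _ < r := by simpa using hx₀
      · have hmem : Real.exp (-t) • x₀ ∈ B := by
          rw [hB, mem_ball_zero_iff, norm_smul]
          calc ‖Real.exp (-t)‖ * ‖x₀‖ ≤ 1 * ‖x₀‖ := by
                apply mul_le_mul_of_nonneg_right _ (norm_nonneg _)
                rw [Real.norm_eq_abs, abs_of_pos (Real.exp_pos _)]
                exact Real.exp_le_one_iff.2 (by linarith)
            _ < r := by simpa using hx₀
        rw [key _ hmem]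
        have hd := (((Real.hasDerivAt_exp (-t)).comp t ((hasDerivAt_id t).neg)).smul_const x₀)
        refine hd.congr_deriv ?_
        simp
    · intro x y hx hy hx0 hy0 t ht
      rw [flow_formula key hx t ht, flow_formula key hy t ht, hx0, hy0]
  · refine ⟨r, hr, 1, one_pos, 1, one_pos, fun x hx hx0 t ht => ?_⟩
    rw [flow_formula key hx t ht, norm_smul, Real.norm_eq_abs,
      abs_of_pos (Real.exp_pos _)]
    rw [one_mul, neg_one_mul]

lemma deriv_inj {n : ℕ} {𝒪 : Set (Vec n)} {g : Vec n → Vec n}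
    (hg0 : g 0 = 0) {A : Vec n →L[ℝ] Vec n} (hA : HasFDerivAt g A 0)
    {δu : ℝ} (hδu : 0 < δu)
    (hex : ∀ x₀ : Vec n, ‖x₀‖ < δu → ∃ x : ℝ → Vec n, IsSolOn 𝒪 g x ∧ x 0 = x₀)
    {δ M lam : ℝ} (hδ : 0 < δ) (hM : 0 < M) (hlam : 0 < lam)
    (hstab : ∀ x : ℝ → Vec n, IsSolOn 𝒪 g x → ‖x 0‖ < δ →
      ∀ t : ℝ, 0 ≤ t → ‖x t‖ ≤ M * Real.exp (-lam * t) * ‖x 0‖) :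
    ∀ v : Vec n, A v = 0 → v = 0 := by
  intro v hAv
  by_contra hv
  -- enlarge M
  set M₀ : ℝ := max M 1 with hM₀def
  have hM₀1 : (1 : ℝ) ≤ M₀ := le_max_right _ _
  have hM₀pos : (0 : ℝ) < M₀ := lt_of_lt_of_le one_pos hM₀1
  have hMM₀ : M ≤ M₀ := le_max_left _ _
  -- choose T ≥ 1 with M₀ * exp (-lam * T) < 1/4
  have htend : Tendsto (fun t : ℝ => M₀ * Real.exp (-(lam * t))) atTop (𝓝 (M₀ * 0)) := by
    apply Tendsto.const_mul
    exact Real.tendsto_exp_neg_atTop_nhds_zero.comp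
      (Tendsto.const_mul_atTop hlam tendsto_id)
  rw [mul_zero] at htend
  obtain ⟨T, hT⟩ := ((htend.eventually_lt_const (by norm_num : (0:ℝ) < 1/4)).and
    (eventually_ge_atTop 1)).exists
  obtain ⟨hT14, hT1⟩ := hT
  have hTpos : (0 : ℝ) < T := lt_of_lt_of_le one_pos hT1
  -- constants
  set K : ℝ := ‖A‖ + 1 with hKdef
  have hKpos : (0 : ℝ) < K := lt_of_lt_of_le one_pos (le_add_of_nonneg_left (norm_nonneg _))
  set E : ℝ := Real.exp (K * T) with hEdef
  have hEpos : (0 : ℝ) < E := Real.exp_pos _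
  set ε' : ℝ := K / (8 * M₀ * E) with hε'def
  have hε'pos : (0 : ℝ) < ε' := div_pos hKpos (by positivity)
  -- little-o bound
  have hlo := hA.isLittleO.def hε'pos
  rw [Metric.eventually_nhds_iff] at hlo
  obtain ⟨ρ, hρpos, hρ⟩ := hlo
  have hρ' : ∀ y : Vec n, ‖y‖ < ρ → ‖g y - A y‖ ≤ ε' * ‖y‖ := by
    intro y hy
    have := hρ (show dist y 0 < ρ by simpa [dist_eq_norm] using hy)
    simpa [hg0] using this
  -- the radius
  set r : ℝ := min (min (δ / 2) (δu / 2)) (ρ / (2 * M₀)) with hrdef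
  have hrpos : (0 : ℝ) < r := by
    apply lt_min (lt_min (by linarith) (by linarith))
    positivity
  have hrδ : r < δ := lt_of_le_of_lt ((min_le_left _ _).trans (min_le_left _ _)) (by linarith)
  have hrδu : r < δu := lt_of_le_of_lt ((min_le_left _ _).trans (min_le_right _ _)) (by linarith)
  have hrρ : M₀ * r < ρ := by
    have h1 : r ≤ ρ / (2 * M₀) := min_le_right _ _
    calc M₀ * r ≤ M₀ * (ρ / (2 * M₀)) := by nlinarith
      _ = ρ / 2 := by field_simp
      _ < ρ := by linarith
  -- initial point
  set x₀ : Vec n := r • (‖v‖⁻¹ • v) with hx₀def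
  have hnv : ‖v‖ ≠ 0 := norm_ne_zero_iff.2 hv
  have hx₀norm : ‖x₀‖ = r := by
    rw [hx₀def, norm_smul, norm_smul, norm_inv, norm_norm, Real.norm_eq_abs,
      abs_of_pos hrpos, inv_mul_cancel₀ hnv, mul_one]
  have hAx₀ : A x₀ = 0 := by
    rw [hx₀def, map_smul, map_smul, hAv]
    simp
  -- solution
  obtain ⟨x, hsol, hx0⟩ := hex x₀ (by rw [hx₀norm]; exact hrδu)
  have hxnorm : ∀ t : ℝ, 0 ≤ t → ‖x t‖ ≤ M₀ * r := by
    intro t ht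
    have := hstab x hsol (by rw [hx0, hx₀norm]; exact hrδ) t ht
    rw [hx0, hx₀norm] at this
    calc ‖x t‖ ≤ M * Real.exp (-lam * t) * r := this
      _ ≤ M₀ * 1 * r := by
          apply mul_le_mul_of_nonneg_right _ hrpos.le
          apply mul_le_mul hMM₀ (Real.exp_le_one_iff.2 (by nlinarith)) (Real.exp_pos _).le
            hM₀pos.le
      _ = M₀ * r := by ring
  -- the deviation z
  set z : ℝ → Vec n := fun t => x t - x₀ with hzdef
  have hgron := norm_le_gronwallBound_of_norm_deriv_right_le (f := z)
    (f' := fun t => g (x t)) (δ := 0) (K := K) (ε := ε' * (M₀ * r)) (a := 0) (b := T)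
    (fun t ht => ((hsol t ht.1).2.sub_const x₀).continuousAt.continuousWithinAt)
    (fun t ht => ((hsol t ht.1).2.sub_const x₀).hasDerivWithinAt)
    (by simp [hzdef, hx0])
    (by
      intro t ht
      have hx_t := hxnorm t ht.1
      have h1 : ‖g (x t) - A (x t)‖ ≤ ε' * ‖x t‖ :=
        hρ' (x t) (lt_of_le_of_lt hx_t hrρ)
      have h2 : A (x t) = A (z t) := by
        rw [hzdef]; simp only [map_sub, hAx₀, sub_zero]
      calc ‖g (x t)‖ = ‖A (x t) + (g (x t) - A (x t))‖ := by ring_nf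
        _ ≤ ‖A (x t)‖ + ‖g (x t) - A (x t)‖ := norm_add_le _ _
        _ ≤ ‖A‖ * ‖z t‖ + ε' * ‖x t‖ := by
            apply add_le_add _ h1
            rw [h2]
            exact A.le_opNorm _
        _ ≤ K * ‖z t‖ + ε' * (M₀ * r) := by
            apply add_le_add
            · apply mul_le_mul_of_nonneg_right _ (norm_nonneg _)
              rw [hKdef]; linarith
            · exact mul_le_mul_of_nonneg_left hx_t hε'pos.le)
  have hzT : ‖z T‖ ≤ gronwallBound 0 K (ε' * (M₀ * r)) (T - 0) :=
    hgron T ⟨hTpos.le, le_rfl⟩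
  have hgb : gronwallBound 0 K (ε' * (M₀ * r)) (T - 0) ≤ r / 8 := by
    rw [gronwallBound_of_K_ne_0 hKpos.ne']
    have hcalc : ε' * (M₀ * r) / K * Real.exp (K * (T - 0)) = r / 8 := by
      rw [sub_zero, ← hEdef, hε'def]
      field_simp
    calc 0 * Real.exp (K * (T - 0)) + ε' * (M₀ * r) / K * (Real.exp (K * (T - 0)) - 1)
        ≤ 0 + ε' * (M₀ * r) / K * Real.exp (K * (T - 0)) := by
          rw [zero_mul]
          apply add_le_add_right
          apply mul_le_mul_of_nonneg_left (by linarith [Real.exp_pos (K * (T - 0))])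
          positivity
      _ = r / 8 := by rw [zero_add, hcalc]
  -- contradiction
  have hxT : ‖x T‖ < r / 4 := by
    have := hstab x hsol (by rw [hx0, hx₀norm]; exact hrδ) T hTpos.le
    rw [hx0, hx₀norm] at this
    calc ‖x T‖ ≤ M * Real.exp (-lam * T) * r := this
      _ ≤ M₀ * Real.exp (-(lam * T)) * r := by
          rw [neg_mul]
          exact mul_le_mul_of_nonneg_right
            (mul_le_mul_of_nonneg_right hMM₀ (Real.exp_pos _).le) hrpos.le
      _ < 1 / 4 * r := mul_lt_mul_of_pos_right hT14 hrpos
      _ = r / 4 := by ring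
  have hlow : r ≤ ‖x T‖ + ‖z T‖ := by
    have : x₀ = x T - z T := by rw [hzdef]; simp
    calc r = ‖x₀‖ := hx₀norm.symm
      _ = ‖x T - z T‖ := by rw [this]
      _ ≤ ‖x T‖ + ‖z T‖ := norm_sub_le _ _
  linarith [hzT.trans hgb]

lemma forward {n m : ℕ} (k : ℕ) (hk : 1 ≤ k)
    (𝒳 : Set (Vec n)) (𝒰 : Set (Vec m))
    (f : Vec n × Vec m → Vec n)
    (hfc : ContDiffOn ℝ k f (𝒳 ×ˢ 𝒰)) (hf0 : f (0, 0) = 0)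
    (hyp : ∃ 𝒪 : Set (Vec n), IsOpen 𝒪 ∧ (0 : Vec n) ∈ 𝒪 ∧
        ∃ h : Vec n → Vec n × Vec m, MapsTo h 𝒪 (𝒳 ×ˢ 𝒰) ∧ h 0 = (0, 0) ∧
          ContDiffOn ℝ k h 𝒪 ∧ UniqCrit 𝒪 (f ∘ h) ∧ LocExpStable 𝒪 (f ∘ h)) :
    ∃ 𝒪 : Set (Vec n), IsOpen 𝒪 ∧ (0 : Vec n) ∈ 𝒪 ∧
        ∃ α : Vec n → Vec n × Vec m, MapsTo α 𝒪 (𝒳 ×ˢ 𝒰) ∧ α 0 = (0, 0) ∧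
          ContDiffOn ℝ k α 𝒪 ∧ ∀ y ∈ 𝒪, f (α y) = y := by
  obtain ⟨𝒪, hO, h0O, h, hmap, hh0, hhC,
    ⟨hgcont, δu, hδu, huniq⟩, δ, hδ, M, hM, lam, hlam, hstab⟩ := hyp
  set g : Vec n → Vec n := f ∘ h with hgdef
  have hg0 : g 0 = 0 := by show f (h 0) = 0; rw [hh0]; exact hf0
  have hgC : ContDiffOn ℝ k g 𝒪 := hfc.comp hhC hmap
  have hgAt : ContDiffAt ℝ k g 0 := hgC.contDiffAt (hO.mem_nhds h0O)
  have hk1 : (1 : WithTop ℕ∞) ≤ (k : WithTop ℕ∞) := by exact_mod_cast hk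
  have hk0 : (k : WithTop ℕ∞) ≠ 0 := by exact_mod_cast (by omega : k ≠ 0)
  have hdiff : DifferentiableAt ℝ g 0 := hgAt.differentiableAt hk0
  set A : Vec n →L[ℝ] Vec n := fderiv ℝ g 0 with hAdef
  have hA : HasFDerivAt g A 0 := hdiff.hasFDerivAt
  -- injectivity of A
  have hinj0 : ∀ v : Vec n, A v = 0 → v = 0 :=
    deriv_inj hg0 hA hδu (fun x₀ hx₀ => (huniq x₀ hx₀).1) hδ hM hlam hstab
  have hinj : Function.Injective (A : Vec n →ₗ[ℝ] Vec n) := by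
    intro a b hab
    have : A (a - b) = 0 := by
      simp only [map_sub]
      simpa [sub_eq_zero] using hab
    have := hinj0 _ this
    rwa [sub_eq_zero] at this
  -- build the continuous linear equiv
  set A' : Vec n ≃L[ℝ] Vec n :=
    (LinearEquiv.ofInjectiveEndo (A : Vec n →ₗ[ℝ] Vec n) hinj).toContinuousLinearEquiv
    with hA'def
  have hA'coe : (A' : Vec n →L[ℝ] Vec n) = A := by
    ext v
    rfl
  have hA'deriv : HasFDerivAt g (A' : Vec n →L[ℝ] Vec n) 0 := by rwa [hA'coe]
  -- local inverse
  set inv : Vec n → Vec n := hgAt.localInverse hA'deriv hk0 with hinvdef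
  have hinvC : ContDiffAt ℝ k inv 0 := by
    have := hgAt.to_localInverse (f' := A') (hf' := hA'deriv) (hn := hk0)
    rwa [hg0] at this
  have hinv0 : inv 0 = 0 := by
    have := hgAt.localInverse_apply_image (f' := A') (hf' := hA'deriv) (hn := hk0)
    rwa [hg0] at this
  have hrinv : ∀ᶠ y in 𝓝 (0 : Vec n), g (inv y) = y := by
    have := (hgAt.hasStrictFDerivAt' hA'deriv hk0).eventually_right_inverse
    rwa [hg0] at this
  have hinvmem : ∀ᶠ y in 𝓝 (0 : Vec n), inv y ∈ 𝒪 := by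
    have hc : ContinuousAt inv 0 := hinvC.continuousAt
    have := hc.preimage_mem_nhds (by rw [hinv0]; exact hO.mem_nhds h0O)
    exact this
  -- α and its regularity
  set α : Vec n → Vec n × Vec m := h ∘ inv with hαdef
  have hαAt : ContDiffAt ℝ k α 0 := by
    apply ContDiffAt.comp
    · rw [hinv0]; exact hhC.contDiffAt (hO.mem_nhds h0O)
    · exact hinvC
  obtain ⟨u, hu_nhds, hu_cd⟩ := hαAt.contDiffOn le_rfl (by simp)
  -- assemble the neighborhood
  set W : Set (Vec n) := {y | inv y ∈ 𝒪 ∧ g (inv y) = y} with hWdef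
  have hW_nhds : u ∩ W ∈ 𝓝 (0 : Vec n) :=
    Filter.inter_mem hu_nhds (hinvmem.and hrinv)
  refine ⟨interior (u ∩ W), isOpen_interior, mem_interior_iff_mem_nhds.2 hW_nhds,
    α, ?_, ?_, ?_, ?_⟩
  · intro y hy
    have hyW : y ∈ W := (interior_subset hy).2
    exact hmap hyW.1
  · rw [hαdef]
    simp [hinv0, hh0]
  · exact hu_cd.mono (interior_subset.trans inter_subset_left)
  · intro y hy
    exact ((interior_subset hy).2).2

/-- For `k ≥ 1` and `f` of class `Cᵏ`, the system `ẋ = f (x,u)` is locally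
exponentially stabilizable by a composition operator with a `Cᵏ` stationary symbol iff `f` has a
`Cᵏ` stationary local section near the origin. -/
theorem statement9
    {n m : ℕ} (hn : 1 ≤ n) (hm : 1 ≤ m) (k : ℕ) (hk : 1 ≤ k)
    (𝒳 : Set (Vec n)) (𝒰 : Set (Vec m))
    (hXUopen : IsOpen (𝒳 ×ˢ 𝒰)) (hXU0 : ((0 : Vec n), (0 : Vec m)) ∈ 𝒳 ×ˢ 𝒰)
    (f : Vec n × Vec m → Vec n)
    (hfc : ContDiffOn ℝ k f (𝒳 ×ˢ 𝒰)) (hf0 : f (0, 0) = 0) :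
    (∃ 𝒪 : Set (Vec n), IsOpen 𝒪 ∧ (0 : Vec n) ∈ 𝒪 ∧
        ∃ h : Vec n → Vec n × Vec m, MapsTo h 𝒪 (𝒳 ×ˢ 𝒰) ∧ h 0 = (0, 0) ∧
          ContDiffOn ℝ k h 𝒪 ∧ UniqCrit 𝒪 (f ∘ h) ∧ LocExpStable 𝒪 (f ∘ h)) ↔
      (∃ 𝒪 : Set (Vec n), IsOpen 𝒪 ∧ (0 : Vec n) ∈ 𝒪 ∧
        ∃ α : Vec n → Vec n × Vec m, MapsTo α 𝒪 (𝒳 ×ˢ 𝒰) ∧ α 0 = (0, 0) ∧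
          ContDiffOn ℝ k α 𝒪 ∧ ∀ y ∈ 𝒪, f (α y) = y) := by
  constructor
  · exact forward k hk 𝒳 𝒰 f hfc hf0
  · exact backward 𝒳 𝒰 f k
end
end

section
/- Let k ≥ 0. The control system ẋ = f(x,u) is locally asymptotically (respectively, exponentially) stabilizable by a Cᵏ stationary feedback law if and only if there exist an open neighborhood 𝒪 ⊆ ℝⁿ of 0 and a Cᵏ map h : 𝒪 → 𝒳 × 𝒰 with h(0) = (0,0) such that: f ∘ h is continuous and the uniqueness criterion holds for the system below; the map h₁ := proj₁ ∘ h, restricted to some open neighborhood of 0, is a C¹ diffeomorphism onto an open subset of ℝⁿ; and the origin is a locally asymptotically (respectively, exponentially) stable equilibrium of ẋ = (J_{h₁}(x))⁻¹ · (f ∘ h)(x), where J_{h₁}(x) denotes the Jacobian matrix of h₁ at x. Moreover, every Cᵏ stationary feedback law u that locally asymptotically (respectively, exponentially) stabilizes the system equals proj₂ ∘ h ∘ h₁⁻¹ for some such h. -/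
open Filter Topology Set Function

noncomputable section

/-- `ẋ = f (x,u)` is locally stabilizable (in the sense of `Stab`) by a `Cᵏ` stationary
feedback law. -/
def FeedbackStab {n m : ℕ} (𝒳 : Set (Vec n)) (𝒰 : Set (Vec m))
    (f : Vec n × Vec m → Vec n) (k : ℕ)
    (Stab : Set (Vec n) → (Vec n → Vec n) → Prop) : Prop :=
  ∃ 𝒪' : Set (Vec n), IsOpen 𝒪' ∧ (0 : Vec n) ∈ 𝒪' ∧ 𝒪' ⊆ 𝒳 ∧
    ∃ u : Vec n → Vec m, MapsTo u 𝒪' 𝒰 ∧ ContDiffOn ℝ k u 𝒪' ∧ u 0 = 0 ∧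
      ContinuousOn (fun x => f (x, u x)) 𝒪' ∧ UniqCrit 𝒪' (fun x => f (x, u x)) ∧
      Stab 𝒪' (fun x => f (x, u x))

/-- There is a `Cᵏ` stationary symbol `h` on an open neighborhood `𝒪` of `0` with `f ∘ h`
continuous, such that `h₁ := proj₁ ∘ h` restricted to some open neighborhood `N` of `0` is a
`C¹` diffeomorphism (with inverse `φ`) onto an open subset, the uniqueness criterion holds for
the system `ẋ = (J_{h₁} x)⁻¹ • (f ∘ h) x`, the origin is a `Stab`-stable equilibrium of it,
and `h`, `φ` satisfy the extra requirement `P h φ (h₁ '' N)`. -/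
def GoodSymbol {n m : ℕ} (𝒳 : Set (Vec n)) (𝒰 : Set (Vec m))
    (f : Vec n × Vec m → Vec n) (k : ℕ)
    (Stab : Set (Vec n) → (Vec n → Vec n) → Prop)
    (P : (Vec n → Vec n × Vec m) → (Vec n → Vec n) → Set (Vec n) → Prop) : Prop :=
  ∃ 𝒪 : Set (Vec n), IsOpen 𝒪 ∧ (0 : Vec n) ∈ 𝒪 ∧
    ∃ h : Vec n → Vec n × Vec m, MapsTo h 𝒪 (𝒳 ×ˢ 𝒰) ∧ ContDiffOn ℝ k h 𝒪 ∧
      h 0 = (0, 0) ∧ ContinuousOn (f ∘ h) 𝒪 ∧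
      ∃ N : Set (Vec n), IsOpen N ∧ (0 : Vec n) ∈ N ∧ N ⊆ 𝒪 ∧
        IsOpen ((fun x => (h x).1) '' N) ∧
        ContDiffOn ℝ 1 (fun x => (h x).1) N ∧
        ∃ φ : Vec n → Vec n,
          ContDiffOn ℝ 1 φ ((fun x => (h x).1) '' N) ∧
          (∀ x ∈ N, φ ((h x).1) = x) ∧
          (∀ y ∈ (fun x => (h x).1) '' N, (h (φ y)).1 = y) ∧
          UniqCrit N
            (fun x => (fderivWithin ℝ (fun z => (h z).1) N x).inverse ((f ∘ h) x)) ∧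
          Stab N
            (fun x => (fderivWithin ℝ (fun z => (h z).1) N x).inverse ((f ∘ h) x)) ∧
          P h φ ((fun x => (h x).1) '' N)

section Aux
variable {n m : ℕ}

lemma isSolOn_congr {N : Set (Vec n)} {g₁ g₂ : Vec n → Vec n}
    (hg : ∀ x ∈ N, g₁ x = g₂ x) {x : ℝ → Vec n} (hx : IsSolOn N g₁ x) : IsSolOn N g₂ x := by
  intro t ht
  obtain ⟨hmem, hd⟩ := hx t ht
  exact ⟨hmem, hg _ hmem ▸ hd⟩

lemma uniqCrit_congr {N : Set (Vec n)} {g₁ g₂ : Vec n → Vec n}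
    (hg : ∀ x ∈ N, g₁ x = g₂ x) (h : UniqCrit N g₁) : UniqCrit N g₂ := by
  obtain ⟨hc, δ, hδ, H⟩ := h
  refine ⟨hc.congr fun x hx => (hg x hx).symm, δ, hδ, fun x₀ hx₀ => ?_⟩
  obtain ⟨⟨x, hx, hx0⟩, huniq⟩ := H x₀ hx₀
  exact ⟨⟨x, isSolOn_congr hg hx, hx0⟩,
    fun a b ha hb ha0 hb0 => huniq a b (isSolOn_congr (fun z hz => (hg z hz).symm) ha)
      (isSolOn_congr (fun z hz => (hg z hz).symm) hb) ha0 hb0⟩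

lemma locAsympStable_congr {N : Set (Vec n)} {g₁ g₂ : Vec n → Vec n}
    (hg : ∀ x ∈ N, g₁ x = g₂ x) (h : LocAsympStable N g₁) : LocAsympStable N g₂ := by
  obtain ⟨h1, δ₀, hδ₀, h2⟩ := h
  have hg' : ∀ x ∈ N, g₂ x = g₁ x := fun x hx => (hg x hx).symm
  refine ⟨fun ε hε => ?_, δ₀, hδ₀, fun x hx hx0 => h2 x (isSolOn_congr hg' hx) hx0⟩
  obtain ⟨δ, hδ, H⟩ := h1 ε hε
  exact ⟨δ, hδ, fun x hx hx0 => H x (isSolOn_congr hg' hx) hx0⟩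

lemma locExpStable_congr {N : Set (Vec n)} {g₁ g₂ : Vec n → Vec n}
    (hg : ∀ x ∈ N, g₁ x = g₂ x) (h : LocExpStable N g₁) : LocExpStable N g₂ := by
  obtain ⟨δ, hδ, M, hM, lam, hlam, H⟩ := h
  have hg' : ∀ x ∈ N, g₂ x = g₁ x := fun x hx => (hg x hx).symm
  exact ⟨δ, hδ, M, hM, lam, hlam, fun x hx hx0 => H x (isSolOn_congr hg' hx) hx0⟩

end Aux

section Fwd
variable {n m : ℕ}

lemma fderivWithin_id_inv (N : Set (Vec n)) (hN : IsOpen N) {x : Vec n} (hx : x ∈ N)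
    (v : Vec n) :
    (fderivWithin ℝ (fun z : Vec n => z) N x).inverse v = v := by
  have h1 : fderivWithin ℝ (fun z : Vec n => z) N x = fderiv ℝ (fun z : Vec n => z) x :=
    fderivWithin_of_isOpen hN hx
  rw [h1, show (fun z : Vec n => z) = id from rfl, fderiv_id,
    show (ContinuousLinearMap.id ℝ (Vec n)) =
      ((ContinuousLinearEquiv.refl ℝ (Vec n) : Vec n ≃L[ℝ] Vec n) :
        Vec n →L[ℝ] Vec n) from rfl,
    ContinuousLinearMap.inverse_equiv]
  rfl

lemma goodSymbol_mono {𝒳 : Set (Vec n)} {𝒰 : Set (Vec m)} {f : Vec n × Vec m → Vec n} {k : ℕ}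
    {Stab : Set (Vec n) → (Vec n → Vec n) → Prop}
    {P Q : (Vec n → Vec n × Vec m) → (Vec n → Vec n) → Set (Vec n) → Prop}
    (hPQ : ∀ h φ V, P h φ V → Q h φ V)
    (H : GoodSymbol 𝒳 𝒰 f k Stab P) : GoodSymbol 𝒳 𝒰 f k Stab Q := by
  obtain ⟨𝒪, h1, h2, h, h3, h4, h5, h6, N, h7, h8, h9, h10, h11, φ, h12, h13, h14, h15, h16, h17⟩ := H
  exact ⟨𝒪, h1, h2, h, h3, h4, h5, h6, N, h7, h8, h9, h10, h11, φ, h12, h13, h14, h15, h16,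
    hPQ _ _ _ h17⟩

lemma forward_dir {𝒳 : Set (Vec n)} {𝒰 : Set (Vec m)} {f : Vec n × Vec m → Vec n} {k : ℕ}
    {Stab : Set (Vec n) → (Vec n → Vec n) → Prop}
    (hcongr : ∀ (N : Set (Vec n)) (g₁ g₂ : Vec n → Vec n),
      (∀ x ∈ N, g₁ x = g₂ x) → Stab N g₁ → Stab N g₂)
    (𝒪' : Set (Vec n)) (u : Vec n → Vec m)
    (hopen : IsOpen 𝒪') (h0 : (0 : Vec n) ∈ 𝒪') (hsub : 𝒪' ⊆ 𝒳) (hmap : MapsTo u 𝒪' 𝒰)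
    (hcd : ContDiffOn ℝ k u 𝒪') (hu0 : u 0 = 0)
    (hcont : ContinuousOn (fun x => f (x, u x)) 𝒪')
    (huniq : UniqCrit 𝒪' (fun x => f (x, u x)))
    (hstab : Stab 𝒪' (fun x => f (x, u x))) :
    GoodSymbol 𝒳 𝒰 f k Stab fun h φ V => ∀ x ∈ 𝒪' ∩ V, u x = (h (φ x)).2 := by
  set h : Vec n → Vec n × Vec m := fun x => (x, u x) with hh
  have himg : (fun x => (h x).1) '' 𝒪' = 𝒪' := by simp [hh]
  have hkey : ∀ x ∈ 𝒪',
      (fderivWithin ℝ (fun z => (h z).1) 𝒪' x).inverse ((f ∘ h) x) = f (x, u x) := by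
    intro x hx
    exact fderivWithin_id_inv 𝒪' hopen hx _
  refine ⟨𝒪', hopen, h0, h, fun x hx => mk_mem_prod (hsub hx) (hmap hx),
    contDiffOn_id.prodMk hcd, by simp [hh, hu0], hcont, 𝒪', hopen, h0, subset_rfl,
    by rw [himg]; exact hopen, contDiffOn_id, id, by rw [himg]; exact contDiffOn_id, fun x _ => rfl,
    fun y hy => rfl, uniqCrit_congr (fun x hx => (hkey x hx).symm) huniq,
    hcongr _ _ _ (fun x hx => (hkey x hx).symm) hstab, fun x _ => rfl⟩

end Fwd

section Bwd
variable {n m : ℕ}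

lemma small_ball {ψ : Vec n → Vec n} (hψ : ContinuousAt ψ 0) (h0 : ψ 0 = 0)
    {W : Set (Vec n)} (hW : IsOpen W) (h0W : (0 : Vec n) ∈ W) {ε : ℝ} (hε : 0 < ε) :
    ∃ δ > (0:ℝ), ∀ z : Vec n, ‖z‖ < δ → z ∈ W ∧ ‖ψ z‖ < ε := by
  have hmem : W ∩ ψ ⁻¹' Metric.ball 0 ε ∈ 𝓝 (0 : Vec n) := by
    refine inter_mem (hW.mem_nhds h0W) (hψ ?_)
    rw [h0]
    exact Metric.ball_mem_nhds _ hε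
  obtain ⟨δ, hδ, hsub⟩ := Metric.mem_nhds_iff.1 hmem
  refine ⟨δ, hδ, fun z hz => ?_⟩
  have := hsub (by rwa [Metric.mem_ball, dist_zero_right])
  exact ⟨this.1, by simpa [Metric.mem_ball, dist_zero_right] using this.2⟩

lemma lip_bound {ψ : Vec n → Vec n} (hψ : ContDiffAt ℝ 1 ψ 0) (h0 : ψ 0 = 0) :
    ∃ C > (0:ℝ), ∃ r > (0:ℝ), ∀ z : Vec n, ‖z‖ < r → ‖ψ z‖ ≤ C * ‖z‖ := by
  obtain ⟨K, t, ht, hK⟩ := hψ.exists_lipschitzOnWith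
  obtain ⟨r, hr, hsub⟩ := Metric.mem_nhds_iff.1 ht
  refine ⟨(K:ℝ) + 1, by positivity, r, hr, fun z hz => ?_⟩
  have hz' : z ∈ t := hsub (by rwa [Metric.mem_ball, dist_zero_right])
  have h0' : (0:Vec n) ∈ t := hsub (by simp [Metric.mem_ball, hr])
  have := hK.dist_le_mul z hz' 0 h0'
  rw [h0, dist_zero_right, dist_zero_right] at this
  nlinarith [norm_nonneg z, this]

lemma deriv_pack {N : Set (Vec n)} {h : Vec n → Vec n × Vec m} {φ : Vec n → Vec n}
    (hNo : IsOpen N)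
    (hV : IsOpen ((fun x => (h x).1) '' N))
    (hc1 : ContDiffOn ℝ 1 (fun x => (h x).1) N)
    (hφc : ContDiffOn ℝ 1 φ ((fun x => (h x).1) '' N))
    (hleft : ∀ x ∈ N, φ ((h x).1) = x)
    (hright : ∀ y ∈ (fun x => (h x).1) '' N, (h (φ y)).1 = y)
    {x : Vec n} (hx : x ∈ N) :
    ∃ e : Vec n ≃L[ℝ] Vec n,
      HasFDerivAt (fun z => (h z).1) (e : Vec n →L[ℝ] Vec n) x ∧
      (∀ v, (fderivWithin ℝ (fun z => (h z).1) N x).inverse v = e.symm v) ∧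
      HasFDerivAt φ (e.symm : Vec n →L[ℝ] Vec n) ((h x).1) := by
  set h₁ : Vec n → Vec n := fun z => (h z).1 with hh₁
  have hxV : h₁ x ∈ h₁ '' N := mem_image_of_mem _ hx
  have hdA : DifferentiableAt ℝ h₁ x :=
    ((hc1.differentiableOn one_ne_zero) x hx).differentiableAt (hNo.mem_nhds hx)
  have hdB : DifferentiableAt ℝ φ (h₁ x) :=
    ((hφc.differentiableOn one_ne_zero) _ hxV).differentiableAt (hV.mem_nhds hxV)
  set A := fderivWithin ℝ h₁ N x with hA
  set B := fderivWithin ℝ φ (h₁ '' N) (h₁ x) with hB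
  have hAeq : A = fderiv ℝ h₁ x := fderivWithin_of_isOpen hNo hx
  have hBeq : B = fderiv ℝ φ (h₁ x) := fderivWithin_of_isOpen hV hxV
  have hhA : HasFDerivAt h₁ A x := hAeq ▸ hdA.hasFDerivAt
  have hhB : HasFDerivAt φ B (h₁ x) := hBeq ▸ hdB.hasFDerivAt
  have hBA : B.comp A = ContinuousLinearMap.id ℝ (Vec n) := by
    have hcomp : HasFDerivAt (φ ∘ h₁) (B.comp A) x := hhB.comp x hhA
    have heq : φ ∘ h₁ =ᶠ[𝓝 x] id := by
      filter_upwards [hNo.mem_nhds hx] with z hz using hleft z hz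
    exact (hcomp.congr_of_eventuallyEq heq.symm).unique (hasFDerivAt_id x)
  have hAB : A.comp B = ContinuousLinearMap.id ℝ (Vec n) := by
    have hhA' : HasFDerivAt h₁ A (φ (h₁ x)) := by rw [hleft x hx]; exact hhA
    have hcomp : HasFDerivAt (h₁ ∘ φ) (A.comp B) (h₁ x) := hhA'.comp _ hhB
    have heq : h₁ ∘ φ =ᶠ[𝓝 (h₁ x)] id := by
      filter_upwards [hV.mem_nhds hxV] with y hy using hright y hy
    exact (hcomp.congr_of_eventuallyEq heq.symm).unique (hasFDerivAt_id (h₁ x))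
  have hl : Function.LeftInverse B A := fun v => by
    have := congrArg (fun L => L v) hBA; simpa using this
  have hr : Function.RightInverse B A := fun v => by
    have := congrArg (fun L => L v) hAB; simpa using this
  refine ⟨ContinuousLinearEquiv.equivOfInverse A B hl hr, hhA, fun v => ?_, hhB⟩
  exact DFunLike.congr_fun
    (ContinuousLinearMap.inverse_equiv (ContinuousLinearEquiv.equivOfInverse A B hl hr)) v


variable {𝒪 N : Set (Vec n)} {h : Vec n → Vec n × Vec m} {φ : Vec n → Vec n}
  {f : Vec n × Vec m → Vec n}

lemma sol_fwd (hNo : IsOpen N)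
    (hV : IsOpen ((fun x => (h x).1) '' N))
    (hc1 : ContDiffOn ℝ 1 (fun x => (h x).1) N)
    (hφc : ContDiffOn ℝ 1 φ ((fun x => (h x).1) '' N))
    (hleft : ∀ x ∈ N, φ ((h x).1) = x)
    (hright : ∀ y ∈ (fun x => (h x).1) '' N, (h (φ y)).1 = y)
    {y : ℝ → Vec n}
    (hy : IsSolOn ((fun x => (h x).1) '' N) (fun z => f (z, (h (φ z)).2)) y) :
    IsSolOn N (fun x => (fderivWithin ℝ (fun z => (h z).1) N x).inverse ((f ∘ h) x))
      (fun t => φ (y t)) := by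
  intro t ht
  obtain ⟨hmem, hd⟩ := hy t ht
  have hφN : φ (y t) ∈ N := by
    obtain ⟨x, hxN, hxy⟩ := hmem
    rw [← hxy, hleft x hxN]; exact hxN
  obtain ⟨e, hhA, hinv, hhB⟩ := deriv_pack hNo hV hc1 hφc hleft hright hφN
  have hy1 : (h (φ (y t))).1 = y t := hright _ hmem
  have hhB' : HasFDerivAt φ (e.symm : Vec n →L[ℝ] Vec n) (y t) := by rw [← hy1]; exact hhB
  have hfh : (f ∘ h) (φ (y t)) = f (y t, (h (φ (y t))).2) := by
    show f (h (φ (y t))) = _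
    rw [show h (φ (y t)) = ((h (φ (y t))).1, (h (φ (y t))).2) from rfl, hy1]
  refine ⟨hφN, ?_⟩
  have hcomp := hhB'.comp_hasDerivAt t hd
  show HasDerivAt (fun s => φ (y s))
    ((fderivWithin ℝ (fun z => (h z).1) N (φ (y t))).inverse ((f ∘ h) (φ (y t)))) t
  rw [hinv, hfh]
  exact hcomp

lemma sol_bwd (hNo : IsOpen N)
    (hV : IsOpen ((fun x => (h x).1) '' N))
    (hc1 : ContDiffOn ℝ 1 (fun x => (h x).1) N)
    (hφc : ContDiffOn ℝ 1 φ ((fun x => (h x).1) '' N))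
    (hleft : ∀ x ∈ N, φ ((h x).1) = x)
    (hright : ∀ y ∈ (fun x => (h x).1) '' N, (h (φ y)).1 = y)
    {x : ℝ → Vec n}
    (hx : IsSolOn N (fun z => (fderivWithin ℝ (fun w => (h w).1) N z).inverse ((f ∘ h) z)) x) :
    IsSolOn ((fun z => (h z).1) '' N) (fun z => f (z, (h (φ z)).2))
      (fun t => (h (x t)).1) := by
  intro t ht
  obtain ⟨hmem, hd⟩ := hx t ht
  obtain ⟨e, hhA, hinv, hhB⟩ := deriv_pack hNo hV hc1 hφc hleft hright hmem
  refine ⟨mem_image_of_mem _ hmem, ?_⟩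
  have hder := hhA.comp_hasDerivAt t hd
  have : (e : Vec n →L[ℝ] Vec n)
      ((fderivWithin ℝ (fun w => (h w).1) N (x t)).inverse ((f ∘ h) (x t)))
      = f ((h (x t)).1, (h (φ ((h (x t)).1))).2) := by
    rw [hinv]
    simp only [ContinuousLinearEquiv.coe_coe, ContinuousLinearEquiv.apply_symm_apply]
    rw [hleft _ hmem]
    show f (h (x t)) = _
    rw [show h (x t) = ((h (x t)).1, (h (x t)).2) from rfl]
  rw [this] at hder
  exact hder


lemma phi_smooth {k : ℕ} (hOo : IsOpen 𝒪) (hNsub : N ⊆ 𝒪) (hcd : ContDiffOn ℝ k h 𝒪)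
    (hNo : IsOpen N)
    (hV : IsOpen ((fun x => (h x).1) '' N))
    (hc1 : ContDiffOn ℝ 1 (fun x => (h x).1) N)
    (hφc : ContDiffOn ℝ 1 φ ((fun x => (h x).1) '' N))
    (hleft : ∀ x ∈ N, φ ((h x).1) = x)
    (hright : ∀ y ∈ (fun x => (h x).1) '' N, (h (φ y)).1 = y) :
    ContDiffOn ℝ k φ ((fun x => (h x).1) '' N) := by
  have hmapsN : ∀ y ∈ (fun x => (h x).1) '' N, φ y ∈ N := by
    rintro y ⟨x, hx, rfl⟩
    rw [hleft x hx]; exact hx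
  set P : OpenPartialHomeomorph (Vec n) (Vec n) :=
    { toFun := fun x => (h x).1
      invFun := φ
      source := N
      target := (fun x => (h x).1) '' N
      map_source' := fun x hx => mem_image_of_mem _ hx
      map_target' := hmapsN
      left_inv' := hleft
      right_inv' := hright
      open_source := hNo
      open_target := hV
      continuousOn_toFun := hc1.continuousOn
      continuousOn_invFun := hφc.continuousOn } with hP
  intro y hy
  have hφyN : φ y ∈ N := hmapsN y hy
  obtain ⟨e, hhA, hinv, hhB⟩ := deriv_pack hNo hV hc1 hφc hleft hright hφyN
  have hck : ContDiffAt ℝ k (fun x => (h x).1) (φ y) :=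
    contDiffAt_fst.comp (φ y) (hcd.contDiffAt (hOo.mem_nhds (hNsub hφyN)))
  have := P.contDiffAt_symm (f₀' := e) (a := y) hy hhA hck
  exact this.contDiffWithinAt


lemma base_pts (hh0 : h 0 = (0, 0)) (h0N : (0 : Vec n) ∈ N)
    (hleft : ∀ x ∈ N, φ ((h x).1) = x) :
    (h (0:Vec n)).1 = 0 ∧ φ 0 = 0 ∧ (0 : Vec n) ∈ (fun x => (h x).1) '' N := by
  have h1 : (h (0:Vec n)).1 = 0 := by rw [hh0]
  have h2 : φ 0 = 0 := by
    have := hleft 0 h0N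
    rwa [h1] at this
  exact ⟨h1, h2, ⟨0, h0N, h1⟩⟩

lemma stab_asymp_transfer (hNo : IsOpen N) (h0N : (0 : Vec n) ∈ N)
    (hh0 : h 0 = (0, 0))
    (hV : IsOpen ((fun x => (h x).1) '' N))
    (hc1 : ContDiffOn ℝ 1 (fun x => (h x).1) N)
    (hφc : ContDiffOn ℝ 1 φ ((fun x => (h x).1) '' N))
    (hleft : ∀ x ∈ N, φ ((h x).1) = x)
    (hright : ∀ y ∈ (fun x => (h x).1) '' N, (h (φ y)).1 = y)
    (hstab : LocAsympStable N
      (fun x => (fderivWithin ℝ (fun z => (h z).1) N x).inverse ((f ∘ h) x))) :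
    LocAsympStable ((fun x => (h x).1) '' N) (fun z => f (z, (h (φ z)).2)) := by
  obtain ⟨h10, hφ0, h0V⟩ := base_pts hh0 h0N hleft
  have hφcont : ContinuousAt φ 0 :=
    (hφc.continuousOn.continuousAt (hV.mem_nhds h0V))
  have hh1cont : ContinuousAt (fun x => (h x).1) 0 :=
    (hc1.continuousOn.continuousAt (hNo.mem_nhds h0N))
  obtain ⟨hS, δ₀, hδ₀, hA⟩ := hstab
  constructor
  · intro ε hε
    obtain ⟨ε₁, hε₁, hball₁⟩ := small_ball hh1cont h10 hNo h0N hε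
    obtain ⟨δ₁, hδ₁, hS₁⟩ := hS ε₁ hε₁
    obtain ⟨δ, hδ, hball⟩ := small_ball hφcont hφ0 hV h0V hδ₁
    refine ⟨δ, hδ, fun y hy hy0 t ht => ?_⟩
    have hx : IsSolOn N _ (fun t => φ (y t)) := sol_fwd hNo hV hc1 hφc hleft hright hy
    have hx0 : ‖φ (y 0)‖ < δ₁ := (hball _ hy0).2
    have hxt := hS₁ _ hx hx0 t ht
    have hyt : y t = (h (φ (y t))).1 := (hright _ (hy t ht).1).symm
    rw [hyt]
    exact (hball₁ _ hxt).2
  · obtain ⟨δ, hδ, hball⟩ := small_ball hφcont hφ0 hV h0V hδ₀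
    refine ⟨δ, hδ, fun y hy hy0 => ?_⟩
    have hx : IsSolOn N _ (fun t => φ (y t)) := sol_fwd hNo hV hc1 hφc hleft hright hy
    have hx0 : ‖φ (y 0)‖ < δ₀ := (hball _ hy0).2
    have htend := hA _ hx hx0
    have htend2 : Tendsto (fun t => (h (φ (y t))).1) atTop (nhds 0) := by
      have := hh1cont.tendsto.comp htend
      simpa [h10, Function.comp_def] using this
    refine htend2.congr' ?_
    filter_upwards [eventually_ge_atTop (0:ℝ)] with t ht
    exact hright _ (hy t ht).1

lemma stab_exp_transfer (hNo : IsOpen N) (h0N : (0 : Vec n) ∈ N)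
    (hh0 : h 0 = (0, 0))
    (hV : IsOpen ((fun x => (h x).1) '' N))
    (hc1 : ContDiffOn ℝ 1 (fun x => (h x).1) N)
    (hφc : ContDiffOn ℝ 1 φ ((fun x => (h x).1) '' N))
    (hleft : ∀ x ∈ N, φ ((h x).1) = x)
    (hright : ∀ y ∈ (fun x => (h x).1) '' N, (h (φ y)).1 = y)
    (hstab : LocExpStable N
      (fun x => (fderivWithin ℝ (fun z => (h z).1) N x).inverse ((f ∘ h) x))) :
    LocExpStable ((fun x => (h x).1) '' N) (fun z => f (z, (h (φ z)).2)) := by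
  obtain ⟨h10, hφ0, h0V⟩ := base_pts hh0 h0N hleft
  have hφcont : ContinuousAt φ 0 :=
    (hφc.continuousOn.continuousAt (hV.mem_nhds h0V))
  obtain ⟨δ, hδ, M, hM, lam, hlam, H⟩ := hstab
  obtain ⟨Ch, hCh, rh, hrh, hlip_h⟩ :=
    lip_bound ((hc1.contDiffAt (hNo.mem_nhds h0N)).congr_of_eventuallyEq
      (Filter.EventuallyEq.refl _ _)) h10
  obtain ⟨Cφ, hCφ, rφ, hrφ, hlip_φ⟩ :=
    lip_bound (hφc.contDiffAt (hV.mem_nhds h0V)) hφ0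
  set ρ : ℝ := min δ (rh / M) with hρdef
  have hρ : 0 < ρ := lt_min hδ (div_pos hrh hM)
  obtain ⟨δ₁, hδ₁, hball⟩ := small_ball hφcont hφ0 hV h0V hρ
  refine ⟨min δ₁ rφ, lt_min hδ₁ hrφ, Ch * M * Cφ, by positivity, lam, hlam,
    fun y hy hy0 t ht => ?_⟩
  have hy0' : ‖y 0‖ < δ₁ := lt_of_lt_of_le hy0 (min_le_left _ _)
  have hy0'' : ‖y 0‖ < rφ := lt_of_lt_of_le hy0 (min_le_right _ _)
  have hx : IsSolOn N _ (fun t => φ (y t)) := sol_fwd hNo hV hc1 hφc hleft hright hy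
  have hx0ρ : ‖φ (y 0)‖ < ρ := (hball _ hy0').2
  have hx0δ : ‖φ (y 0)‖ < δ := lt_of_lt_of_le hx0ρ (min_le_left _ _)
  have hxbound := H _ hx hx0δ
  have hxt := hxbound t ht
  have hexp1 : Real.exp (-lam * t) ≤ 1 := by
    apply Real.exp_le_one_iff.2
    nlinarith
  have hxt_small : ‖φ (y t)‖ < rh := by
    have h1 : M * Real.exp (-lam * t) * ‖φ (y 0)‖ ≤ M * ‖φ (y 0)‖ := by
      nlinarith [mul_nonneg hM.le (norm_nonneg (φ (y 0))), hexp1,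
        (Real.exp_pos (-lam * t)).le]
    have h2 : M * ‖φ (y 0)‖ < M * (rh / M) :=
      mul_lt_mul_of_pos_left (lt_of_lt_of_le hx0ρ (min_le_right _ _)) hM
    have h3 : M * (rh / M) = rh := by field_simp
    linarith
  have hyt : y t = (h (φ (y t))).1 := (hright _ (hy t ht).1).symm
  have hb1 : ‖y t‖ ≤ Ch * ‖φ (y t)‖ := by
    have := hlip_h (φ (y t)) hxt_small
    rwa [← hyt] at this
  have hb2 : ‖φ (y 0)‖ ≤ Cφ * ‖y 0‖ := hlip_φ _ hy0''
  calc ‖y t‖ ≤ Ch * ‖φ (y t)‖ := hb1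
    _ ≤ Ch * (M * Real.exp (-lam * t) * ‖φ (y 0)‖) := by
        exact mul_le_mul_of_nonneg_left hxt (le_of_lt hCh)
    _ ≤ Ch * (M * Real.exp (-lam * t) * (Cφ * ‖y 0‖)) := by
        have : (0:ℝ) ≤ M * Real.exp (-lam * t) := by positivity
        have := mul_le_mul_of_nonneg_left hb2 this
        nlinarith [Real.exp_pos (-lam * t)]
    _ = Ch * M * Cφ * Real.exp (-lam * t) * ‖y 0‖ := by ring


lemma uniq_transfer (hNo : IsOpen N) (h0N : (0 : Vec n) ∈ N)
    (hh0 : h 0 = (0, 0))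
    (hV : IsOpen ((fun x => (h x).1) '' N))
    (hc1 : ContDiffOn ℝ 1 (fun x => (h x).1) N)
    (hφc : ContDiffOn ℝ 1 φ ((fun x => (h x).1) '' N))
    (hleft : ∀ x ∈ N, φ ((h x).1) = x)
    (hright : ∀ y ∈ (fun x => (h x).1) '' N, (h (φ y)).1 = y)
    (hFc : ContinuousOn (fun z => f (z, (h (φ z)).2)) ((fun x => (h x).1) '' N))
    (huniq : UniqCrit N
      (fun x => (fderivWithin ℝ (fun z => (h z).1) N x).inverse ((f ∘ h) x))) :
    UniqCrit ((fun x => (h x).1) '' N) (fun z => f (z, (h (φ z)).2)) := by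
  obtain ⟨h10, hφ0, h0V⟩ := base_pts hh0 h0N hleft
  have hφcont : ContinuousAt φ 0 :=
    (hφc.continuousOn.continuousAt (hV.mem_nhds h0V))
  obtain ⟨hgc, δ, hδ, H⟩ := huniq
  obtain ⟨δ', hδ', hball⟩ := small_ball hφcont hφ0 hV h0V hδ
  refine ⟨hFc, δ', hδ', fun y₀ hy₀ => ?_⟩
  obtain ⟨hy₀V, hφy₀⟩ := hball _ hy₀
  obtain ⟨⟨x, hx, hx0⟩, huni⟩ := H (φ y₀) hφy₀
  constructor
  · refine ⟨fun t => (h (x t)).1, sol_bwd hNo hV hc1 hφc hleft hright hx, ?_⟩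
    show (h (x 0)).1 = y₀
    rw [hx0]
    exact hright _ hy₀V
  · intro a b ha hb ha0 hb0 t ht
    have hxa := sol_fwd (f := f) hNo hV hc1 hφc hleft hright ha
    have hxb := sol_fwd (f := f) hNo hV hc1 hφc hleft hright hb
    have heq := huni _ _ hxa hxb (by rw [ha0]) (by rw [hb0]) t ht
    have h1 : a t = (h (φ (a t))).1 := (hright _ (ha t ht).1).symm
    have h2 : b t = (h (φ (b t))).1 := (hright _ (hb t ht).1).symm
    rw [h1, h2, heq]

lemma backward_core {𝒳 : Set (Vec n)} {𝒰 : Set (Vec m)} {k : ℕ}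
    {Stab : Set (Vec n) → (Vec n → Vec n) → Prop}
    (hOo : IsOpen 𝒪) (h0O : (0 : Vec n) ∈ 𝒪)
    (hmap : MapsTo h 𝒪 (𝒳 ×ˢ 𝒰)) (hcd : ContDiffOn ℝ k h 𝒪)
    (hh0 : h 0 = (0, 0)) (hfhc : ContinuousOn (f ∘ h) 𝒪)
    (hNo : IsOpen N) (h0N : (0 : Vec n) ∈ N) (hNsub : N ⊆ 𝒪)
    (hV : IsOpen ((fun x => (h x).1) '' N))
    (hc1 : ContDiffOn ℝ 1 (fun x => (h x).1) N)
    (hφc : ContDiffOn ℝ 1 φ ((fun x => (h x).1) '' N))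
    (hleft : ∀ x ∈ N, φ ((h x).1) = x)
    (hright : ∀ y ∈ (fun x => (h x).1) '' N, (h (φ y)).1 = y)
    (huniq : UniqCrit N
      (fun x => (fderivWithin ℝ (fun z => (h z).1) N x).inverse ((f ∘ h) x)))
    (hstabF : Stab ((fun x => (h x).1) '' N) (fun z => f (z, (h (φ z)).2))) :
    FeedbackStab 𝒳 𝒰 f k Stab := by
  obtain ⟨h10, hφ0, h0V⟩ := base_pts hh0 h0N hleft
  have hmapsN : ∀ y ∈ (fun x => (h x).1) '' N, φ y ∈ N := by
    rintro y ⟨x, hx, rfl⟩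
    rw [hleft x hx]; exact hx
  set V := (fun x => (h x).1) '' N with hVdef
  set u : Vec n → Vec m := fun y => (h (φ y)).2 with hudef
  have hFcongr : ∀ y ∈ V, ((f ∘ h) ∘ φ) y = f (y, u y) := by
    intro y hy
    show f (h (φ y)) = _
    rw [show h (φ y) = ((h (φ y)).1, (h (φ y)).2) from rfl, hright y hy]
  have hFc : ContinuousOn (fun z => f (z, u z)) V := by
    have hcomp : ContinuousOn ((f ∘ h) ∘ φ) V :=
      hfhc.comp hφc.continuousOn (fun y hy => hNsub (hmapsN y hy))
    exact hcomp.congr fun y hy => (hFcongr y hy).symm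
  refine ⟨V, hV, h0V, ?_, u, ?_, ?_, ?_, hFc, ?_, hstabF⟩
  · rintro y ⟨x, hx, rfl⟩
    exact (hmap (hNsub hx)).1
  · intro y hy
    exact (hmap (hNsub (hmapsN y hy))).2
  · have hφk : ContDiffOn ℝ k φ V := phi_smooth hOo hNsub hcd hNo hV hc1 hφc hleft hright
    have : ContDiffOn ℝ k (h ∘ φ) V :=
      hcd.comp hφk (fun y hy => hNsub (hmapsN y hy))
    exact contDiff_snd.comp_contDiffOn this
  · rw [hudef]
    simp only [hφ0, hh0]
  · exact uniq_transfer hNo h0N hh0 hV hc1 hφc hleft hright hFc huniq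

end Bwd


/-- For `k ≥ 0`, the system `ẋ = f (x,u)` is locally asymptotically
(resp. exponentially) stabilizable by a `Cᵏ` stationary feedback law iff there is a composition
symbol `h` as in `GoodSymbol`; moreover every stabilizing `Cᵏ` stationary feedback law `u`
equals `proj₂ ∘ h ∘ h₁⁻¹` for some such `h`. -/
theorem statement14
    {n m : ℕ} (hn : 1 ≤ n) (hm : 1 ≤ m)
    (𝒳 : Set (Vec n)) (𝒰 : Set (Vec m))
    (hXUopen : IsOpen (𝒳 ×ˢ 𝒰)) (hXU0 : ((0 : Vec n), (0 : Vec m)) ∈ 𝒳 ×ˢ 𝒰)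
    (f : Vec n × Vec m → Vec n)
    (hfc : ContinuousOn f (𝒳 ×ˢ 𝒰)) (hf0 : f (0, 0) = 0)
    (k : ℕ) :
    (FeedbackStab 𝒳 𝒰 f k LocAsympStable ↔
      GoodSymbol 𝒳 𝒰 f k LocAsympStable fun _ _ _ => True) ∧
    (FeedbackStab 𝒳 𝒰 f k LocExpStable ↔
      GoodSymbol 𝒳 𝒰 f k LocExpStable fun _ _ _ => True) ∧
    (∀ (𝒪' : Set (Vec n)) (u : Vec n → Vec m),
      IsOpen 𝒪' → (0 : Vec n) ∈ 𝒪' → 𝒪' ⊆ 𝒳 → MapsTo u 𝒪' 𝒰 →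
      ContDiffOn ℝ k u 𝒪' → u 0 = 0 →
      ContinuousOn (fun x => f (x, u x)) 𝒪' → UniqCrit 𝒪' (fun x => f (x, u x)) →
      LocAsympStable 𝒪' (fun x => f (x, u x)) →
      GoodSymbol 𝒳 𝒰 f k LocAsympStable fun h φ V =>
        ∀ x ∈ 𝒪' ∩ V, u x = (h (φ x)).2) ∧
    (∀ (𝒪' : Set (Vec n)) (u : Vec n → Vec m),
      IsOpen 𝒪' → (0 : Vec n) ∈ 𝒪' → 𝒪' ⊆ 𝒳 → MapsTo u 𝒪' 𝒰 →
      ContDiffOn ℝ k u 𝒪' → u 0 = 0 →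
      ContinuousOn (fun x => f (x, u x)) 𝒪' → UniqCrit 𝒪' (fun x => f (x, u x)) →
      LocExpStable 𝒪' (fun x => f (x, u x)) →
      GoodSymbol 𝒳 𝒰 f k LocExpStable fun h φ V =>
        ∀ x ∈ 𝒪' ∩ V, u x = (h (φ x)).2) := by
  refine ⟨⟨?_, ?_⟩, ⟨?_, ?_⟩, ?_, ?_⟩
  · rintro ⟨𝒪', hopen, h0, hsub, u, hmap, hcd, hu0, hcont, huniq, hstab⟩
    exact goodSymbol_mono (fun _ _ _ _ => trivial)
      (forward_dir (fun N g₁ g₂ => locAsympStable_congr) 𝒪' u hopen h0 hsub hmap hcd hu0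
        hcont huniq hstab)
  · rintro ⟨𝒪, hOo, h0O, h, hmap, hcd, hh0, hfhc, N, hNo, h0N, hNsub, hV, hc1, φ, hφc,
      hleft, hright, huniq, hstab, -⟩
    exact backward_core hOo h0O hmap hcd hh0 hfhc hNo h0N hNsub hV hc1 hφc hleft hright huniq
      (stab_asymp_transfer hNo h0N hh0 hV hc1 hφc hleft hright hstab)
  · rintro ⟨𝒪', hopen, h0, hsub, u, hmap, hcd, hu0, hcont, huniq, hstab⟩
    exact goodSymbol_mono (fun _ _ _ _ => trivial)
      (forward_dir (fun N g₁ g₂ => locExpStable_congr) 𝒪' u hopen h0 hsub hmap hcd hu0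
        hcont huniq hstab)
  · rintro ⟨𝒪, hOo, h0O, h, hmap, hcd, hh0, hfhc, N, hNo, h0N, hNsub, hV, hc1, φ, hφc,
      hleft, hright, huniq, hstab, -⟩
    exact backward_core hOo h0O hmap hcd hh0 hfhc hNo h0N hNsub hV hc1 hφc hleft hright huniq
      (stab_exp_transfer hNo h0N hh0 hV hc1 hφc hleft hright hstab)
  · intro 𝒪' u hopen h0 hsub hmap hcd hu0 hcont huniq hstab
    exact forward_dir (fun N g₁ g₂ => locAsympStable_congr) 𝒪' u hopen h0 hsub hmap hcd hu0
      hcont huniq hstab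
  · intro 𝒪' u hopen h0 hsub hmap hcd hu0 hcont huniq hstab
    exact forward_dir (fun N g₁ g₂ => locExpStable_congr) 𝒪' u hopen h0 hsub hmap hcd hu0
      hcont huniq hstab
end
end

section
/- Suppose the control system ẋ = f(x,u) is locally exponentially stabilizable by a composition operator with a stationary symbol h : 𝒪 → 𝒳 × 𝒰, and suppose in addition that g := f ∘ h is of class Cˡ for some ℓ ≥ 1 (with the uniqueness criterion holding for g and the origin a locally exponentially stable equilibrium of ẋ = g(x)). Then there exists a connected open neighborhood V ⊆ 𝒪 of 0 such that the restriction of g to V is a Cˡ diffeomorphism onto its image, which is an open subset of ℝⁿ; in particular the Jacobian matrix of g is invertible at every point of V. -/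
open Filter Topology Set Function

noncomputable section

/-- A continuous linear endomorphism that is a unit of the endomorphism ring is bijective. -/
lemma isUnit_clm_bijective {n : ℕ} {T : Vec n →L[ℝ] Vec n} (h : IsUnit T) :
    Function.Bijective T := by
  obtain ⟨u, rfl⟩ := h
  refine Function.bijective_iff_has_inverse.mpr ⟨(↑u⁻¹ : Vec n →L[ℝ] Vec n), ?_, ?_⟩
  · intro x
    show (↑u⁻¹ : Vec n →L[ℝ] Vec n) ((↑u : Vec n →L[ℝ] Vec n) x) = x
    rw [← ContinuousLinearMap.mul_apply, u.inv_mul, ContinuousLinearMap.one_apply]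
  · intro x
    show (↑u : Vec n →L[ℝ] Vec n) ((↑u⁻¹ : Vec n →L[ℝ] Vec n) x) = x
    rw [← ContinuousLinearMap.mul_apply, u.mul_inv, ContinuousLinearMap.one_apply]

/-- Core analytic lemma: local exponential stability together with local existence of
solutions forces the derivative of the right-hand side at the origin to be injective. -/
lemma stable_fderiv_injective {n : ℕ} {𝒪 : Set (Vec n)} {g : Vec n → Vec n}
    {A : Vec n →L[ℝ] Vec n} (hg0 : g 0 = 0) (hd : HasFDerivAt g A 0)
    (huniq : UniqCrit 𝒪 g) (hstab : LocExpStable 𝒪 g) :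
    Function.Injective A := by
  obtain ⟨δs, hδs, M, hM, lam, hlam, hstab'⟩ := hstab
  obtain ⟨-, δu, hδu, huni⟩ := huniq
  suffices key : ∀ v : Vec n, A v = 0 → v = 0 by
    intro a b hab
    have h := key (a - b) (by rw [map_sub, hab, sub_self])
    exact sub_eq_zero.mp h
  intro v hAv
  by_contra hv
  have hvpos : 0 < ‖v‖ := norm_pos_iff.mpr hv
  -- choose a time `T ≥ 0` at which the stability bound has decayed below `1/4`
  have htend : Tendsto (fun t : ℝ => M * Real.exp (-lam * t)) atTop (𝓝 0) := by
    have h0 : Tendsto (fun t : ℝ => lam * t) atTop atTop :=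
      Tendsto.const_mul_atTop hlam tendsto_id
    have h1 : Tendsto (fun t : ℝ => -(lam * t)) atTop atBot :=
      tendsto_neg_atTop_atBot.comp h0
    have h2 : Tendsto (fun t : ℝ => M * Real.exp (-(lam * t))) atTop (𝓝 (M * 0)) :=
      (Real.tendsto_exp_atBot.comp h1).const_mul M
    simpa [neg_mul] using h2
  obtain ⟨T, hTlt, hT0⟩ :=
    ((htend.eventually (eventually_lt_nhds (by norm_num : (0:ℝ) < 1/4))).and
      (eventually_ge_atTop (0:ℝ))).exists
  obtain ⟨K, hK, hnormA⟩ : ∃ K : ℝ, 0 < K ∧ ‖A‖ ≤ K :=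
    ⟨‖A‖ + 1, by positivity, by linarith⟩
  obtain ⟨ε₀, hε₀, hε₀le⟩ : ∃ e : ℝ, 0 < e ∧
      e * M / K * (Real.exp (K * T) - 1) ≤ 1 / 4 := by
    have hE : 0 < Real.exp (K * T) := Real.exp_pos _
    refine ⟨K / (4 * M * Real.exp (K * T)), by positivity, ?_⟩
    have heq : K / (4 * M * Real.exp (K * T)) * M / K * (Real.exp (K * T) - 1)
        = (Real.exp (K * T) - 1) / (4 * Real.exp (K * T)) := by
      field_simp
    rw [heq, div_le_div_iff₀ (by positivity) (by norm_num)]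
    nlinarith
  -- radius on which `g` is `ε₀`-approximated by `A`
  have hlo : (fun x => g x - A x) =o[𝓝 0] (fun x => x) := by
    simpa [hg0] using hd.isLittleO
  have hev : ∀ᶠ x in 𝓝 (0 : Vec n), ‖g x - A x‖ ≤ ε₀ * ‖x‖ := hlo.def hε₀
  obtain ⟨r, hr0, hr⟩ := Metric.eventually_nhds_iff.mp hev
  -- choose the size of the initial value
  obtain ⟨s, hs, hsδs, hsδu, hMs⟩ :
      ∃ s : ℝ, 0 < s ∧ s < δs ∧ s < δu ∧ M * s < r := by
    refine ⟨min (min δs δu) (r / (M + 1)) / 2, by positivity, ?_, ?_, ?_⟩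
    · calc min (min δs δu) (r / (M + 1)) / 2 < min (min δs δu) (r / (M + 1)) :=
            half_lt_self (by positivity)
        _ ≤ δs := le_trans (min_le_left _ _) (min_le_left _ _)
    · calc min (min δs δu) (r / (M + 1)) / 2 < min (min δs δu) (r / (M + 1)) :=
            half_lt_self (by positivity)
        _ ≤ δu := le_trans (min_le_left _ _) (min_le_right _ _)
    · have h1 : min (min δs δu) (r / (M + 1)) / 2 ≤ r / (M + 1) :=
        le_trans (half_le_self (by positivity)) (min_le_right _ _)
      have h2 : min (min δs δu) (r / (M + 1)) / 2 * (M + 1) ≤ r := by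
        rw [← le_div_iff₀ (by positivity : (0:ℝ) < M + 1)]
        exact h1
      nlinarith [(by positivity : (0:ℝ) < min (min δs δu) (r / (M + 1)) / 2)]
  set x₀ : Vec n := (s / ‖v‖) • v with hx₀def
  have hx₀n : ‖x₀‖ = s := by
    rw [hx₀def, norm_smul, Real.norm_eq_abs, abs_of_pos (div_pos hs hvpos),
      div_mul_cancel₀ _ hvpos.ne']
  have hAx₀ : A x₀ = 0 := by rw [hx₀def, map_smul, hAv, smul_zero]
  obtain ⟨⟨x, hsol, hx0⟩, -⟩ := huni x₀ (by rw [hx₀n]; exact hsδu)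
  have hb : ∀ t : ℝ, 0 ≤ t → ‖x t‖ ≤ M * Real.exp (-lam * t) * s := by
    have h := hstab' x hsol (by rw [hx0, hx₀n]; exact hsδs)
    intro t ht
    have := h t ht
    rwa [hx0, hx₀n] at this
  have hxMs : ∀ t : ℝ, 0 ≤ t → ‖x t‖ ≤ M * s := by
    intro t ht
    have h1 : Real.exp (-lam * t) ≤ 1 := by
      rw [← Real.exp_zero]
      exact Real.exp_le_exp.mpr (by nlinarith)
    have h2 := hb t ht
    nlinarith [mul_nonneg (mul_nonneg hM.le hs.le) (sub_nonneg.mpr h1)]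
  have hsmall : ∀ t : ℝ, 0 ≤ t → ‖x t‖ < r := fun t ht =>
    lt_of_le_of_lt (hxMs t ht) hMs
  -- Grönwall estimate for `t ↦ x t - x₀`
  have hcont : ContinuousOn (fun t => x t - x₀) (Icc 0 T) := fun t ht =>
    (((hsol t ht.1).2).sub_const x₀).continuousAt.continuousWithinAt
  have hderiv : ∀ t ∈ Ico (0:ℝ) T,
      HasDerivWithinAt (fun t => x t - x₀) (g (x t)) (Ici t) t := fun t ht =>
    (((hsol t ht.1).2).sub_const x₀).hasDerivWithinAt
  have hgb : ∀ t ∈ Ico (0:ℝ) T, ‖g (x t)‖ ≤ K * ‖x t - x₀‖ + ε₀ * (M * s) := by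
    intro t ht
    have h1 : ‖g (x t) - A (x t)‖ ≤ ε₀ * ‖x t‖ := by
      apply hr
      rw [dist_zero_right]
      exact hsmall t ht.1
    have h2 : A (x t) = A (x t - x₀) := by rw [map_sub, hAx₀, sub_zero]
    have h3 : ‖A (x t - x₀)‖ ≤ ‖A‖ * ‖x t - x₀‖ := A.le_opNorm _
    have h4 : ‖x t‖ ≤ M * s := hxMs t ht.1
    calc ‖g (x t)‖ = ‖(g (x t) - A (x t)) + A (x t - x₀)‖ := by
          rw [← h2, sub_add_cancel]
      _ ≤ ‖g (x t) - A (x t)‖ + ‖A (x t - x₀)‖ := norm_add_le _ _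
      _ ≤ K * ‖x t - x₀‖ + ε₀ * (M * s) := by
          have h5 : ‖A‖ * ‖x t - x₀‖ ≤ K * ‖x t - x₀‖ :=
            mul_le_mul_of_nonneg_right hnormA (norm_nonneg _)
          have h6 : ε₀ * ‖x t‖ ≤ ε₀ * (M * s) :=
            mul_le_mul_of_nonneg_left h4 hε₀.le
          linarith
  have hgr := norm_le_gronwallBound_of_norm_deriv_right_le (δ := 0) (K := K)
    (ε := ε₀ * (M * s)) hcont hderiv (by simp [hx0]) hgb T ⟨hT0, le_refl T⟩
  have hgb2 : gronwallBound 0 K (ε₀ * (M * s)) (T - 0) ≤ s / 4 := by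
    rw [gronwallBound_of_K_ne_0 hK.ne']
    simp only [sub_zero, zero_mul, zero_add]
    have h := mul_le_mul_of_nonneg_right hε₀le hs.le
    calc ε₀ * (M * s) / K * (Real.exp (K * T) - 1)
        = ε₀ * M / K * (Real.exp (K * T) - 1) * s := by ring
      _ ≤ 1 / 4 * s := h
      _ = s / 4 := by ring
  have h1 : ‖x T - x₀‖ ≤ s / 4 := le_trans hgr hgb2
  have h2 : ‖x T‖ < s / 4 := by
    have := hb T hT0
    nlinarith
  have h3 : s ≤ ‖x T‖ + ‖x T - x₀‖ := by
    calc s = ‖x₀‖ := hx₀n.symm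
      _ = ‖x T - (x T - x₀)‖ := by rw [sub_sub_cancel]
      _ ≤ ‖x T‖ + ‖x T - x₀‖ := norm_sub_le _ _
  linarith

/-- If `ẋ = f (x,u)` is locally exponentially stabilized by the composition
operator with stationary symbol `h` and `g := f ∘ h` is of class `Cˡ`, `ℓ ≥ 1`, then `g`
restricts to a `Cˡ` diffeomorphism of some connected open neighborhood `V ⊆ 𝒪` of `0` onto its
open image; in particular the Jacobian of `g` is invertible at every point of `V`. -/
theorem statement16
    {n m : ℕ} (hn : 1 ≤ n) (hm : 1 ≤ m)
    (𝒳 : Set (Vec n)) (𝒰 : Set (Vec m))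
    (hXUopen : IsOpen (𝒳 ×ˢ 𝒰)) (hXU0 : ((0 : Vec n), (0 : Vec m)) ∈ 𝒳 ×ˢ 𝒰)
    (f : Vec n × Vec m → Vec n)
    (hfc : ContinuousOn f (𝒳 ×ˢ 𝒰)) (hf0 : f (0, 0) = 0)
    (ℓ : ℕ) (hℓ : 1 ≤ ℓ)
    (𝒪 : Set (Vec n)) (h𝒪 : IsOpen 𝒪) (h𝒪0 : (0 : Vec n) ∈ 𝒪)
    (h : Vec n → Vec n × Vec m) (hmap : MapsTo h 𝒪 (𝒳 ×ˢ 𝒰)) (hst : h 0 = (0, 0))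
    (hfh : ContDiffOn ℝ ℓ (f ∘ h) 𝒪)
    (huniq : UniqCrit 𝒪 (f ∘ h)) (hstab : LocExpStable 𝒪 (f ∘ h)) :
    ∃ V : Set (Vec n), IsOpen V ∧ IsConnected V ∧ (0 : Vec n) ∈ V ∧ V ⊆ 𝒪 ∧
      InjOn (f ∘ h) V ∧ IsOpen ((f ∘ h) '' V) ∧
      (∃ φ : Vec n → Vec n, ContDiffOn ℝ ℓ φ ((f ∘ h) '' V) ∧
        (∀ x ∈ V, φ ((f ∘ h) x) = x) ∧
        ∀ y ∈ (f ∘ h) '' V, (f ∘ h) (φ y) = y) ∧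
      ∀ x ∈ V, Function.Bijective (fderivWithin ℝ (f ∘ h) 𝒪 x) := by
  classical
  set g : Vec n → Vec n := f ∘ h with hgdef
  have hℓ' : (1 : WithTop ℕ∞) ≤ (ℓ : WithTop ℕ∞) := by exact_mod_cast hℓ
  have hg0 : g 0 = 0 := by
    simp only [hgdef, Function.comp_apply, hst, hf0]
  -- differentiability of `g` at points of `𝒪`
  have hcdAt : ∀ x ∈ 𝒪, ContDiffAt ℝ ℓ g x := fun x hx =>
    hfh.contDiffAt (h𝒪.mem_nhds hx)
  have hdiffAt : ∀ x ∈ 𝒪, DifferentiableAt ℝ g x := fun x hx =>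
    (hcdAt x hx).differentiableAt (ENat.one_le_iff_ne_zero_withTop.mp hℓ')
  -- the derivative at `0` is bijective
  have hd0 : HasFDerivAt g (fderiv ℝ g 0) 0 := (hdiffAt 0 h𝒪0).hasFDerivAt
  have hinj : Function.Injective (fderiv ℝ g 0) :=
    stable_fderiv_injective hg0 hd0 huniq hstab
  have hbij0 : Function.Bijective (fderiv ℝ g 0) := by
    refine ⟨hinj, ?_⟩
    have := (LinearMap.injective_iff_surjective
      (f := (fderiv ℝ g 0 : Vec n →ₗ[ℝ] Vec n))).mp hinj
    exact this
  -- upgrade to a continuous linear equivalence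
  let e₀ : Vec n ≃L[ℝ] Vec n :=
    (LinearEquiv.ofBijective (fderiv ℝ g 0 : Vec n →ₗ[ℝ] Vec n) hbij0).toContinuousLinearEquiv
  have hcoe0 : (e₀ : Vec n →L[ℝ] Vec n) = fderiv ℝ g 0 := by
    ext v
    rfl
  have hd0' : HasFDerivAt g (e₀ : Vec n →L[ℝ] Vec n) 0 := by rw [hcoe0]; exact hd0
  -- the set where the derivative is invertible is open
  have hDcont : ContinuousOn (fderiv ℝ g) 𝒪 :=
    hfh.continuousOn_fderiv_of_isOpen h𝒪 hℓ'
  have hWopen : IsOpen (𝒪 ∩ (fderiv ℝ g) ⁻¹' {T : Vec n →L[ℝ] Vec n | IsUnit T}) :=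
    hDcont.isOpen_inter_preimage h𝒪 Units.isOpen
  have hW0 : (0 : Vec n) ∈ 𝒪 ∩ (fderiv ℝ g) ⁻¹' {T : Vec n →L[ℝ] Vec n | IsUnit T} := by
    refine ⟨h𝒪0, ?_⟩
    exact ⟨e₀.toUnit, hcoe0⟩
  -- the partial homeomorphism given by the inverse function theorem at `0`
  set F₀ : OpenPartialHomeomorph (Vec n) (Vec n) :=
    (hcdAt 0 h𝒪0).toOpenPartialHomeomorph g hd0' (ENat.one_le_iff_ne_zero_withTop.mp hℓ') with hF₀def
  have hF₀coe : (F₀ : Vec n → Vec n) = g := rfl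
  have hF₀src : (0 : Vec n) ∈ F₀.source :=
    (hcdAt 0 h𝒪0).mem_toOpenPartialHomeomorph_source hd0' (ENat.one_le_iff_ne_zero_withTop.mp hℓ')
  -- choose a ball around `0`
  obtain ⟨ρ, hρ, hball⟩ := Metric.isOpen_iff.mp (F₀.open_source.inter hWopen) 0
    ⟨hF₀src, hW0⟩
  set V : Set (Vec n) := Metric.ball (0 : Vec n) ρ with hVdef
  have hVsrc : V ⊆ F₀.source := fun y hy => (hball hy).1
  have hV𝒪 : V ⊆ 𝒪 := fun y hy => (hball hy).2.1
  have hVunit : ∀ y ∈ V, IsUnit (fderiv ℝ g y) := fun y hy => (hball hy).2.2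
  have hV0 : (0 : Vec n) ∈ V := Metric.mem_ball_self hρ
  -- an equivalence derivative at every point of `V`
  have hstrictAt : ∀ y ∈ V, ∃ e : Vec n ≃L[ℝ] Vec n,
      (e : Vec n →L[ℝ] Vec n) = fderiv ℝ g y ∧
        HasStrictFDerivAt g (e : Vec n →L[ℝ] Vec n) y := by
    intro y hy
    obtain ⟨u, hu⟩ := hVunit y hy
    have hcoe : ((ContinuousLinearEquiv.ofUnit u) : Vec n →L[ℝ] Vec n)
        = (↑u : Vec n →L[ℝ] Vec n) := by ext v; rfl
    refine ⟨ContinuousLinearEquiv.ofUnit u, by rw [hcoe, hu], ?_⟩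
    have hdy : HasFDerivAt g ((ContinuousLinearEquiv.ofUnit u : Vec n →L[ℝ] Vec n)) y := by
      rw [hcoe, hu]
      exact (hdiffAt y (hV𝒪 hy)).hasFDerivAt
    exact (hcdAt y (hV𝒪 hy)).hasStrictFDerivAt' hdy (ENat.one_le_iff_ne_zero_withTop.mp hℓ')
  -- openness of the image
  have hopen : IsOpen (g '' V) := by
    rw [isOpen_iff_mem_nhds]
    rintro _ ⟨y, hyV, rfl⟩
    obtain ⟨e, -, hstrict⟩ := hstrictAt y hyV
    rw [← hstrict.map_nhds_eq_of_equiv]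
    exact image_mem_map (Metric.isOpen_ball.mem_nhds hyV)
  -- injectivity
  have hinjV : InjOn g V := by
    have := F₀.injOn
    rw [hF₀coe] at this
    exact this.mono hVsrc
  refine ⟨V, Metric.isOpen_ball, (convex_ball _ _).isConnected ⟨0, hV0⟩, hV0, hV𝒪,
    hinjV, hopen, ⟨⇑F₀.symm, ?_, ?_, ?_⟩, ?_⟩
  · -- smoothness of the inverse
    intro y₀ hy₀
    obtain ⟨x₀, hx₀V, rfl⟩ := hy₀
    obtain ⟨e, hecoe, -⟩ := hstrictAt x₀ hx₀V
    have hcdx : ContDiffAt ℝ ℓ g x₀ := hcdAt x₀ (hV𝒪 hx₀V)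
    have hdx : HasFDerivAt g ((e : Vec n →L[ℝ] Vec n)) x₀ := by
      rw [hecoe]
      exact (hdiffAt x₀ (hV𝒪 hx₀V)).hasFDerivAt
    set L : Vec n → Vec n := hcdx.localInverse hdx (ENat.one_le_iff_ne_zero_withTop.mp hℓ') with hLdef
    have hLcd : ContDiffAt ℝ ℓ L (g x₀) := hcdx.to_localInverse hdx (ENat.one_le_iff_ne_zero_withTop.mp hℓ')
    have hLx₀ : L (g x₀) = x₀ := hcdx.localInverse_apply_image hdx (ENat.one_le_iff_ne_zero_withTop.mp hℓ')
    have hstrict' : HasStrictFDerivAt g ((e : Vec n →L[ℝ] Vec n)) x₀ :=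
      hcdx.hasStrictFDerivAt' hdx (ENat.one_le_iff_ne_zero_withTop.mp hℓ')
    have ev1 : ∀ᶠ y in 𝓝 (g x₀), g (L y) = y := hstrict'.eventually_right_inverse
    have ev2 : ∀ᶠ y in 𝓝 (g x₀), L y ∈ F₀.source := by
      have hc : ContinuousAt L (g x₀) := hLcd.continuousAt
      have : F₀.source ∈ 𝓝 (L (g x₀)) := by
        rw [hLx₀]
        exact F₀.open_source.mem_nhds (hVsrc hx₀V)
      exact hc.eventually_mem this
    have ev3 : ∀ᶠ y in 𝓝 (g x₀), y ∈ g '' V :=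
      hopen.mem_nhds ⟨x₀, hx₀V, rfl⟩
    have heq : ∀ᶠ y in 𝓝 (g x₀), (⇑F₀.symm) y = L y := by
      filter_upwards [ev1, ev2, ev3] with y h1 h2 h3
      obtain ⟨x', hx', rfl⟩ := h3
      have hx'src : x' ∈ F₀.source := hVsrc hx'
      have hL : L (g x') = x' := by
        apply F₀.injOn h2 hx'src
        show F₀ (L (g x')) = F₀ x'
        rw [hF₀coe]
        exact h1
      rw [hL]
      have : F₀.symm (F₀ x') = x' := F₀.left_inv hx'src
      rwa [hF₀coe] at this
    exact ((hLcd.congr_of_eventuallyEq heq).contDiffWithinAt)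
  · -- left inverse on `V`
    intro x hx
    have : F₀.symm (F₀ x) = x := F₀.left_inv (hVsrc hx)
    rwa [hF₀coe] at this
  · -- right inverse on the image
    rintro _ ⟨x, hx, rfl⟩
    have htgt : F₀ x ∈ F₀.target := F₀.map_source (hVsrc hx)
    have : F₀ (F₀.symm (F₀ x)) = F₀ x := F₀.right_inv htgt
    rwa [hF₀coe] at this
  · -- the Jacobian is invertible on `V`
    intro x hx
    rw [fderivWithin_of_isOpen h𝒪 (hV𝒪 hx)]
    exact isUnit_clm_bijective (hVunit x hx)
end
end
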